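/- arXiv:2301.04240 — 8 statements merged into one kernel-verified Lean document; each statement's English description precedes it below -/
import Mathlib

section
/- For any two real symmetric n×n matrices X and Y, the Euclidean norm of the difference of their eigenvalue vectors (each arranged in nonincreasing order) is at most the Frobenius norm of X − Y, i.e. ‖λ(X) − λ(Y)‖ ≤ ‖X − Y‖. -/
open Filter Topology Set Matrix

noncomputable section

def IsEigVec {n : ℕ} (X : Matrix (Fin n) (Fin n) ℝ) (a : Fin n → ℝ) : Prop :=
  (∀ i j : Fin n, i ≤ j → a j ≤ a i) ∧
    ∃ U : Matrix (Fin n) (Fin n) ℝ, U * Uᵀ = 1 ∧ X = U * Matrix.diagonal a * Uᵀ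

def vnorm {n : ℕ} (x : Fin n → ℝ) : ℝ := Real.sqrt (∑ i, (x i) ^ 2)

def fnorm {n : ℕ} (A : Matrix (Fin n) (Fin n) ℝ) : ℝ := Real.sqrt (∑ i, ∑ j, (A i j) ^ 2)

def mInner {n : ℕ} (A B : Matrix (Fin n) (Fin n) ℝ) : ℝ := Matrix.trace (A * B)

def subderiv {E : Type*} [AddCommGroup E] [Module ℝ E] [TopologicalSpace E]
    (f : E → EReal) (x w : E) : EReal :=
  Filter.liminf (fun p : ℝ × E => (((p.1)⁻¹ : ℝ) : EReal) * (f (x + p.1 • p.2) - f x))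
    ((nhdsWithin (0 : ℝ) (Set.Ioi 0)) ×ˢ nhds w)

def subderiv2With {E : Type*} [AddCommGroup E] [Module ℝ E] [TopologicalSpace E]
    (ip : E → E → ℝ) (f : E → EReal) (x v w : E) : EReal :=
  Filter.liminf (fun p : ℝ × E =>
      ((2 / p.1 ^ 2 : ℝ) : EReal) * (f (x + p.1 • p.2) - f x - ((p.1 * ip v p.2 : ℝ) : EReal)))
    ((nhdsWithin (0 : ℝ) (Set.Ioi 0)) ×ˢ nhds w)

def parabSubderiv {E : Type*} [AddCommGroup E] [Module ℝ E] [TopologicalSpace E]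
    (f : E → EReal) (x w : E) (dfw : ℝ) (z : E) : EReal :=
  Filter.liminf (fun p : ℝ × E =>
      ((2 / p.1 ^ 2 : ℝ) : EReal) *
        (f (x + p.1 • w + (p.1 ^ 2 / 2) • p.2) - f x - ((p.1 * dfw : ℝ) : EReal)))
    ((nhdsWithin (0 : ℝ) (Set.Ioi 0)) ×ˢ nhds z)

def tcone {E : Type*} [AddCommGroup E] [Module ℝ E] [TopologicalSpace E]
    (C : Set E) (x : E) : Set E :=
  {w | ∃ (t : ℕ → ℝ) (v : ℕ → E), (∀ k, 0 < t k) ∧ Filter.Tendsto t Filter.atTop (nhds 0) ∧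
      Filter.Tendsto v Filter.atTop (nhds w) ∧ ∀ k, x + t k • v k ∈ C}

def tcone2 {E : Type*} [AddCommGroup E] [Module ℝ E] [TopologicalSpace E]
    (C : Set E) (x w : E) : Set E :=
  {u | ∃ (t : ℕ → ℝ) (v : ℕ → E), (∀ k, 0 < t k) ∧ Filter.Tendsto t Filter.atTop (nhds 0) ∧
      Filter.Tendsto v Filter.atTop (nhds u) ∧ ∀ k, x + t k • w + (t k ^ 2 / 2) • v k ∈ C}


-- telescoping with indicator
lemma tele (f : ℕ → ℝ) : ∀ m i, i ≤ m →
    ∑ k ∈ Finset.range m, (if i ≤ k then f k - f (k+1) else 0) = f i - f m := by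
  intro m
  induction m with
  | zero => intro i hi; simp [Nat.le_zero.mp hi]
  | succ m ih =>
    intro i hi
    rw [Finset.sum_range_succ]
    rcases Nat.lt_or_ge i (m+1) with h | h
    · have := ih i (Nat.lt_succ_iff.mp h)
      rw [this, if_pos (Nat.lt_succ_iff.mp h)]; ring
    · have hi' : i = m+1 := le_antisymm hi h
      subst hi'
      rw [if_neg (by omega)]
      rw [Finset.sum_eq_zero]
      · ring
      · intro k hk
        rw [if_neg]
        simp at hk; omega

lemma cutsum {n k : ℕ} (hk : k < n) (f : ℕ → ℝ) :
    ∑ i ∈ Finset.range n, (if i ≤ k then f i else 0) = ∑ i ∈ Finset.range (k+1), f i := by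
  rw [← Finset.sum_subset (Finset.range_subset_range.2 (by omega : k+1 ≤ n))]
  · exact Finset.sum_congr rfl (fun i hi => if_pos (by simp at hi; omega))
  · intro i _ hi; rw [if_neg]; simp at hi; omega

lemma keyN (m : ℕ) (a b : ℕ → ℝ) (D : ℕ → ℕ → ℝ)
    (ha : ∀ k, a (k+1) ≤ a k) (hb : ∀ k, b (k+1) ≤ b k)
    (hD : ∀ i j, 0 ≤ D i j)
    (hrow : ∀ i ∈ Finset.range (m+1), ∑ j ∈ Finset.range (m+1), D i j = 1)
    (hcol : ∀ j ∈ Finset.range (m+1), ∑ i ∈ Finset.range (m+1), D i j = 1) :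
    ∑ i ∈ Finset.range (m+1), ∑ j ∈ Finset.range (m+1), D i j * (a i * b j)
      ≤ ∑ i ∈ Finset.range (m+1), a i * b i := by
  set n := m + 1 with hn
  set M : ℕ → ℕ → ℝ := fun i j => (if i = j then (1:ℝ) else 0) - D i j with hM
  have hMrow : ∀ i ∈ Finset.range n, ∑ j ∈ Finset.range n, M i j = 0 := by
    intro i hi
    simp only [hM, Finset.sum_sub_distrib, hrow i hi, Finset.sum_ite_eq, hi, if_true, sub_self]
  have hMcol : ∀ j ∈ Finset.range n, ∑ i ∈ Finset.range n, M i j = 0 := by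
    intro j hj
    simp only [hM, Finset.sum_sub_distrib, hcol j hj, Finset.sum_ite_eq', hj, if_true, sub_self]
  set P : ℕ → ℝ := fun i => ∑ k ∈ Finset.range m, (if i ≤ k then a k - a (k+1) else 0) with hPdef
  set Q : ℕ → ℝ := fun j => ∑ l ∈ Finset.range m, (if j ≤ l then b l - b (l+1) else 0) with hQdef
  have hP : ∀ i ∈ Finset.range n, a i = a m + P i := by
    intro i hi
    rw [hPdef]; simp only []
    rw [tele a m i (by simp at hi; omega)]; ring
  have hQ : ∀ j ∈ Finset.range n, b j = b m + Q j := by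
    intro j hj
    rw [hQdef]; simp only []
    rw [tele b m j (by simp at hj; omega)]; ring
  -- the difference equals the M-weighted bilinear form
  have key : ∑ i ∈ Finset.range n, a i * b i
      - ∑ i ∈ Finset.range n, ∑ j ∈ Finset.range n, D i j * (a i * b j)
      = ∑ i ∈ Finset.range n, ∑ j ∈ Finset.range n, M i j * (a i * b j) := by
    simp only [hM, sub_mul, Finset.sum_sub_distrib]
    congr 1
    refine Finset.sum_congr rfl fun i hi => ?_
    have : ∀ j, (if i = j then (1:ℝ) else 0) * (a i * b j)
        = if i = j then a i * b j else 0 := by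
      intro j; split <;> ring
    simp_rw [this]
    rw [Finset.sum_ite_eq, if_pos hi]
  rw [← sub_nonneg, key]
  -- expand via P, Q
  have expand : ∑ i ∈ Finset.range n, ∑ j ∈ Finset.range n, M i j * (a i * b j)
      = ∑ i ∈ Finset.range n, ∑ j ∈ Finset.range n,
          (a m * b m * M i j + a m * (M i j * Q j) + b m * (M i j * P i)
            + M i j * (P i * Q j)) := by
    refine Finset.sum_congr rfl fun i hi => Finset.sum_congr rfl fun j hj => ?_
    rw [hP i hi, hQ j hj]; ring
  rw [expand]
  simp only [Finset.sum_add_distrib]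
  have h1 : ∑ i ∈ Finset.range n, ∑ j ∈ Finset.range n, a m * b m * M i j = 0 := by
    refine Finset.sum_eq_zero fun i hi => ?_
    rw [← Finset.mul_sum, hMrow i hi, mul_zero]
  have h2 : ∑ i ∈ Finset.range n, ∑ j ∈ Finset.range n, a m * (M i j * Q j) = 0 := by
    rw [Finset.sum_comm]
    refine Finset.sum_eq_zero fun j hj => ?_
    have : ∀ i, a m * (M i j * Q j) = M i j * (a m * Q j) := fun i => by ring
    simp_rw [this]
    rw [← Finset.sum_mul, hMcol j hj, zero_mul]
  have h3 : ∑ i ∈ Finset.range n, ∑ j ∈ Finset.range n, b m * (M i j * P i) = 0 := by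
    refine Finset.sum_eq_zero fun i hi => ?_
    have : ∀ j, b m * (M i j * P i) = M i j * (b m * P i) := fun j => by ring
    simp_rw [this]
    rw [← Finset.sum_mul, hMrow i hi, zero_mul]
  rw [h1, h2, h3]
  simp only [zero_add, add_zero]
  -- main bilinear term
  have h4 : ∑ i ∈ Finset.range n, ∑ j ∈ Finset.range n, M i j * (P i * Q j)
      = ∑ k ∈ Finset.range m, ∑ l ∈ Finset.range m,
          (a k - a (k+1)) * (b l - b (l+1)) *
            (∑ i ∈ Finset.range (k+1), ∑ j ∈ Finset.range (l+1), M i j) := by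
    set f : ℕ → ℕ → ℕ → ℕ → ℝ := fun i j k l =>
      if i ≤ k then (if j ≤ l then
        (a k - a (k+1)) * (b l - b (l+1)) * M i j else 0) else 0 with hf
    have step1 : ∀ i j, M i j * (P i * Q j)
        = ∑ k ∈ Finset.range m, ∑ l ∈ Finset.range m, f i j k l := by
      intro i j
      rw [hPdef, hQdef, hf]
      simp only []
      rw [Finset.sum_mul_sum, Finset.mul_sum]
      refine Finset.sum_congr rfl fun k hk => ?_
      rw [Finset.mul_sum]
      refine Finset.sum_congr rfl fun l hl => ?_
      split <;> split <;> ring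
    calc ∑ i ∈ Finset.range n, ∑ j ∈ Finset.range n, M i j * (P i * Q j)
        = ∑ i ∈ Finset.range n, ∑ j ∈ Finset.range n, ∑ k ∈ Finset.range m, ∑ l ∈ Finset.range m, f i j k l := by
          exact Finset.sum_congr rfl fun i _ => Finset.sum_congr rfl fun j _ => step1 i j
      _ = ∑ i ∈ Finset.range n, ∑ k ∈ Finset.range m, ∑ j ∈ Finset.range n, ∑ l ∈ Finset.range m, f i j k l :=
          Finset.sum_congr rfl fun i _ => Finset.sum_comm
      _ = ∑ k ∈ Finset.range m, ∑ i ∈ Finset.range n, ∑ j ∈ Finset.range n, ∑ l ∈ Finset.range m, f i j k l :=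
          Finset.sum_comm
      _ = ∑ k ∈ Finset.range m, ∑ i ∈ Finset.range n, ∑ l ∈ Finset.range m, ∑ j ∈ Finset.range n, f i j k l :=
          Finset.sum_congr rfl fun k _ => Finset.sum_congr rfl fun i _ => Finset.sum_comm
      _ = ∑ k ∈ Finset.range m, ∑ l ∈ Finset.range m, ∑ i ∈ Finset.range n, ∑ j ∈ Finset.range n, f i j k l :=
          Finset.sum_congr rfl fun k _ => Finset.sum_comm
      _ = ∑ k ∈ Finset.range m, ∑ l ∈ Finset.range m,
            (a k - a (k+1)) * (b l - b (l+1)) *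
              (∑ i ∈ Finset.range (k+1), ∑ j ∈ Finset.range (l+1), M i j) := by
          refine Finset.sum_congr rfl fun k hk => Finset.sum_congr rfl fun l hl => ?_
          simp only [Finset.mem_range] at hk hl
          have e1 : ∑ i ∈ Finset.range n, ∑ j ∈ Finset.range n, f i j k l
              = ∑ i ∈ Finset.range n, (if i ≤ k then
                  ∑ j ∈ Finset.range n, (if j ≤ l then
                    (a k - a (k+1)) * (b l - b (l+1)) * M i j else 0) else 0) := by
            refine Finset.sum_congr rfl fun i _ => ?_
            by_cases h : i ≤ k
            · simp only [hf, if_pos h]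
            · simp only [hf, if_neg h]
              exact Finset.sum_eq_zero fun j _ => rfl
          rw [e1, cutsum (by omega : k < n)]
          rw [Finset.mul_sum]
          refine Finset.sum_congr rfl fun i _ => ?_
          rw [cutsum (by omega : l < n), Finset.mul_sum]
  rw [h4]
  -- nonnegativity of every term
  refine Finset.sum_nonneg fun k hk => Finset.sum_nonneg fun l hl => ?_
  simp only [Finset.mem_range] at hk hl
  have hα : 0 ≤ a k - a (k+1) := by linarith [ha k]
  have hβ : 0 ≤ b l - b (l+1) := by linarith [hb l]
  refine mul_nonneg (mul_nonneg hα hβ) ?_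
  -- T k l ≥ 0
  have hsplit : ∑ i ∈ Finset.range (k+1), ∑ j ∈ Finset.range (l+1), M i j
      = (∑ i ∈ Finset.range (k+1), ∑ j ∈ Finset.range (l+1), (if i = j then (1:ℝ) else 0))
        - ∑ i ∈ Finset.range (k+1), ∑ j ∈ Finset.range (l+1), D i j := by
    rw [hM]
    simp [Finset.sum_sub_distrib]
  rw [hsplit, sub_nonneg]
  rcases le_or_gt k l with hkl | hkl
  · -- bound by row sums: S ≤ k+1, identity part = k+1
    have hid : ∑ i ∈ Finset.range (k+1), ∑ j ∈ Finset.range (l+1), (if i = j then (1:ℝ) else 0)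
        = (k+1 : ℝ) := by
      have hh : ∀ i ∈ Finset.range (k+1), ∑ j ∈ Finset.range (l+1), (if i = j then (1:ℝ) else 0) = 1 := by
        intro i hi
        simp only [Finset.mem_range] at hi
        rw [Finset.sum_ite_eq, if_pos (Finset.mem_range.2 (by omega))]
      rw [Finset.sum_congr rfl hh]
      simp
    rw [hid]
    calc ∑ i ∈ Finset.range (k+1), ∑ j ∈ Finset.range (l+1), D i j
        ≤ ∑ i ∈ Finset.range (k+1), ∑ j ∈ Finset.range n, D i j := by
          refine Finset.sum_le_sum fun i _ => ?_
          exact Finset.sum_le_sum_of_subset_of_nonneg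
            (Finset.range_subset_range.2 (by omega)) (fun j _ _ => hD i j)
      _ = ∑ i ∈ Finset.range (k+1), 1 := by
          refine Finset.sum_congr rfl fun i hi => ?_
          simp only [Finset.mem_range] at hi
          exact hrow i (Finset.mem_range.2 (by omega))
      _ = (k+1 : ℝ) := by simp
  · -- bound by column sums: S ≤ l+1, identity part = l+1
    have hid : ∑ i ∈ Finset.range (k+1), ∑ j ∈ Finset.range (l+1), (if i = j then (1:ℝ) else 0)
        = (l+1 : ℝ) := by
      rw [Finset.sum_comm]
      have hh : ∀ j ∈ Finset.range (l+1), ∑ i ∈ Finset.range (k+1), (if i = j then (1:ℝ) else 0) = 1 := by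
        intro j hj
        simp only [Finset.mem_range] at hj
        rw [Finset.sum_ite_eq', if_pos (Finset.mem_range.2 (by omega))]
      rw [Finset.sum_congr rfl hh]
      simp
    rw [hid]
    calc ∑ i ∈ Finset.range (k+1), ∑ j ∈ Finset.range (l+1), D i j
        ≤ ∑ i ∈ Finset.range n, ∑ j ∈ Finset.range (l+1), D i j := by
          refine Finset.sum_le_sum_of_subset_of_nonneg
            (Finset.range_subset_range.2 (by omega))
            (fun i _ _ => Finset.sum_nonneg fun j _ => hD i j)
      _ = ∑ j ∈ Finset.range (l+1), ∑ i ∈ Finset.range n, D i j := Finset.sum_comm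
      _ = ∑ j ∈ Finset.range (l+1), 1 := by
          refine Finset.sum_congr rfl fun j hj => ?_
          simp only [Finset.mem_range] at hj
          exact hcol j (Finset.mem_range.2 (by omega))
      _ = (l+1 : ℝ) := by simp

lemma keyFin {n : ℕ} (a b : Fin n → ℝ) (D : Fin n → Fin n → ℝ)
    (ha : ∀ i j : Fin n, i ≤ j → a j ≤ a i) (hb : ∀ i j : Fin n, i ≤ j → b j ≤ b i)
    (hD : ∀ i j, 0 ≤ D i j) (hrow : ∀ i, ∑ j, D i j = 1) (hcol : ∀ j, ∑ i, D i j = 1) :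
    ∑ i, ∑ j, D i j * (a i * b j) ≤ ∑ i, a i * b i := by
  rcases n with _ | m
  · simp
  set a' : ℕ → ℝ := fun i => a ⟨min i m, by omega⟩ with ha'
  set b' : ℕ → ℝ := fun i => b ⟨min i m, by omega⟩ with hb'
  set D' : ℕ → ℕ → ℝ := fun i j =>
    if h : i < m + 1 ∧ j < m + 1 then D ⟨i, h.1⟩ ⟨j, h.2⟩ else 0 with hD'
  have haval : ∀ i : Fin (m+1), a' i.val = a i := by
    intro i
    simp only [ha']
    congr 1
    exact Fin.ext (by simp; omega)
  have hbval : ∀ i : Fin (m+1), b' i.val = b i := by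
    intro i
    simp only [hb']
    congr 1
    exact Fin.ext (by simp; omega)
  have hDval : ∀ i j : Fin (m+1), D' i.val j.val = D i j := by
    intro i j
    simp only [hD']
    rw [dif_pos ⟨i.isLt, j.isLt⟩]
  have key := keyN m a' b' D'
    (fun k => by
      refine ha ⟨min k m, by omega⟩ ⟨min (k+1) m, by omega⟩ ?_
      simp only [Fin.le_def]
      omega)
    (fun k => by
      refine hb ⟨min k m, by omega⟩ ⟨min (k+1) m, by omega⟩ ?_
      simp only [Fin.le_def]
      omega)
    (fun i j => by
      simp only [hD']
      split
      · exact hD _ _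
      · exact le_refl 0)
    (fun i hi => by
      simp only [Finset.mem_range] at hi
      rw [← Fin.sum_univ_eq_sum_range (fun j => D' i j) (m+1)]
      rw [show (fun j : Fin (m+1) => D' i j.val) = fun j : Fin (m+1) => D ⟨i, hi⟩ j from ?_]
      · exact hrow ⟨i, hi⟩
      · funext j
        simp only [hD']
        rw [dif_pos ⟨hi, j.isLt⟩])
    (fun j hj => by
      simp only [Finset.mem_range] at hj
      rw [← Fin.sum_univ_eq_sum_range (fun i => D' i j) (m+1)]
      rw [show (fun i : Fin (m+1) => D' i.val j) = fun i : Fin (m+1) => D i ⟨j, hj⟩ from ?_]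
      · exact hcol ⟨j, hj⟩
      · funext i
        simp only [hD']
        rw [dif_pos ⟨i.isLt, hj⟩])
  calc ∑ i, ∑ j, D i j * (a i * b j)
      = ∑ i ∈ Finset.range (m+1), ∑ j ∈ Finset.range (m+1), D' i j * (a' i * b' j) := by
        rw [← Fin.sum_univ_eq_sum_range (fun i => ∑ j ∈ Finset.range (m+1), D' i j * (a' i * b' j)) (m+1)]
        refine Finset.sum_congr rfl fun i _ => ?_
        rw [← Fin.sum_univ_eq_sum_range (fun j => D' i.val j * (a' i.val * b' j)) (m+1)]
        refine Finset.sum_congr rfl fun j _ => ?_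
        rw [hDval, haval, hbval]
    _ ≤ ∑ i ∈ Finset.range (m+1), a' i * b' i := key
    _ = ∑ i, a i * b i := by
        rw [← Fin.sum_univ_eq_sum_range (fun i => a' i * b' i) (m+1)]
        exact Finset.sum_congr rfl fun i _ => by rw [haval, hbval]

/-- ‖λ(X) − λ(Y)‖ ≤ ‖X − Y‖ (Frobenius). -/
theorem eigenvalue_vector_lipschitz {n : ℕ} (X Y : Matrix (Fin n) (Fin n) ℝ)
    (hX : X.IsSymm) (hY : Y.IsSymm) (a b : Fin n → ℝ)
    (ha : IsEigVec X a) (hb : IsEigVec Y b) :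
    vnorm (a - b) ≤ fnorm (X - Y) := by
  classical
  obtain ⟨ha1, U, hU, hXU⟩ := ha
  obtain ⟨hb1, V, hV, hYV⟩ := hb
  have hUU : Uᵀ * U = 1 := mul_eq_one_comm.mp hU
  have hVV : Vᵀ * V = 1 := mul_eq_one_comm.mp hV
  set Q : Matrix (Fin n) (Fin n) ℝ := Uᵀ * V with hQdef
  have hQT : Qᵀ = Vᵀ * U := by
    rw [hQdef, Matrix.transpose_mul, Matrix.transpose_transpose]
  have hQQ : Q * Qᵀ = 1 := by
    rw [hQdef, hQT, Matrix.mul_assoc, ← Matrix.mul_assoc V Vᵀ U, hV, Matrix.one_mul, hUU]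
  have hQTQ : Qᵀ * Q = 1 := mul_eq_one_comm.mp hQQ
  have hrowQ : ∀ i, ∑ j, (Q i j)^2 = 1 := by
    intro i
    have h := hQQ
    rw [← Matrix.ext_iff] at h
    have h2 := h i i
    simpa [Matrix.mul_apply, Matrix.one_apply, pow_two] using h2
  have hcolQ : ∀ j, ∑ i, (Q i j)^2 = 1 := by
    intro j
    have h := hQTQ
    rw [← Matrix.ext_iff] at h
    have h2 := h j j
    simpa [Matrix.mul_apply, Matrix.one_apply, pow_two] using h2
  have trace_mul_eq : ∀ A B : Matrix (Fin n) (Fin n) ℝ,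
      Matrix.trace (A * B) = ∑ i, ∑ j, A i j * B j i := fun A B => by
    simp [Matrix.trace, Matrix.mul_apply, Matrix.diag]
  have reshape : ∀ (W : Matrix (Fin n) (Fin n) ℝ) (A B : Matrix (Fin n) (Fin n) ℝ),
      Matrix.trace ((U * A * Uᵀ) * (W * B * Wᵀ))
        = Matrix.trace (A * ((Uᵀ * W) * (B * (Wᵀ * U)))) := by
    intro W A B
    rw [show (U * A * Uᵀ) * (W * B * Wᵀ) = U * (A * (Uᵀ * (W * (B * Wᵀ))))
      by simp only [Matrix.mul_assoc]]
    rw [Matrix.trace_mul_comm]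
    congr 1
    simp only [Matrix.mul_assoc]
  have tXX : Matrix.trace (X * X) = ∑ i, (a i)^2 := by
    rw [hXU, reshape U (Matrix.diagonal a) (Matrix.diagonal a), hUU, Matrix.one_mul,
      Matrix.mul_one, Matrix.diagonal_mul_diagonal, Matrix.trace_diagonal]
    simp [pow_two]
  have reshapeV : ∀ (A B : Matrix (Fin n) (Fin n) ℝ),
      Matrix.trace ((V * A * Vᵀ) * (V * B * Vᵀ)) = Matrix.trace (A * B) := by
    intro A B
    rw [show (V * A * Vᵀ) * (V * B * Vᵀ) = V * (A * ((Vᵀ * V) * (B * Vᵀ)))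
      by simp only [Matrix.mul_assoc]]
    rw [hVV, Matrix.one_mul, Matrix.trace_mul_comm]
    congr 1
    simp only [Matrix.mul_assoc, hVV, Matrix.mul_one]
  have tYY : Matrix.trace (Y * Y) = ∑ i, (b i)^2 := by
    rw [hYV, reshapeV, Matrix.diagonal_mul_diagonal, Matrix.trace_diagonal]
    simp [pow_two]
  have tXY : Matrix.trace (X * Y) = ∑ i, ∑ j, (Q i j)^2 * (a i * b j) := by
    rw [hXU, hYV, reshape V (Matrix.diagonal a) (Matrix.diagonal b), ← hQdef, ← hQT]
    rw [show Matrix.diagonal a * (Q * (Matrix.diagonal b * Qᵀ))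
        = (Matrix.diagonal a * Q) * (Matrix.diagonal b * Qᵀ) by simp only [Matrix.mul_assoc]]
    rw [trace_mul_eq]
    refine Finset.sum_congr rfl fun i _ => Finset.sum_congr rfl fun j _ => ?_
    rw [Matrix.diagonal_mul, Matrix.diagonal_mul, Matrix.transpose_apply]
    ring
  have keyineq : Matrix.trace (X * Y) ≤ ∑ i, a i * b i := by
    rw [tXY]
    exact keyFin a b (fun i j => (Q i j)^2) ha1 hb1 (fun i j => sq_nonneg _) hrowQ hcolQ
  -- reduce to squared inequality
  unfold vnorm fnorm
  apply Real.sqrt_le_sqrt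
  have hA : (X - Y)ᵀ = X - Y := by
    rw [Matrix.transpose_sub, hX, hY]
  have rhs : ∑ i, ∑ j, ((X - Y) i j)^2
      = Matrix.trace (X*X) - 2 * Matrix.trace (X*Y) + Matrix.trace (Y*Y) := by
    have e1 : ∑ i, ∑ j, ((X - Y) i j)^2 = Matrix.trace ((X - Y) * (X - Y)) := by
      rw [trace_mul_eq]
      refine Finset.sum_congr rfl fun i _ => Finset.sum_congr rfl fun j _ => ?_
      have : (X - Y) j i = (X - Y) i j := by
        conv_lhs => rw [← hA]
        rfl
      rw [this, pow_two]
    rw [e1, sub_mul, mul_sub, mul_sub, Matrix.trace_sub, Matrix.trace_sub,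
      Matrix.trace_sub, Matrix.trace_mul_comm Y X]
    ring
  have lhs : ∑ i, ((a - b) i)^2
      = ∑ i, (a i)^2 - 2 * (∑ i, a i * b i) + ∑ i, (b i)^2 := by
    rw [Finset.mul_sum, ← Finset.sum_sub_distrib, ← Finset.sum_add_distrib]
    refine Finset.sum_congr rfl fun i _ => ?_
    simp only [Pi.sub_apply]
    ring
  rw [lhs, rhs, tXX, tYY]
  linarith
end
end

section
/- Fan's trace inequality: for any two real symmetric n×n matrices X and Y, ⟨X, Y⟩ ≤ ⟨λ(X), λ(Y)⟩, where ⟨X,Y⟩ = tr(XY) and λ(·) is the eigenvalue vector in nonincreasing order. -/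
open Filter Topology Set Matrix

noncomputable section

lemma ds_key {n : ℕ} (S : Matrix (Fin n) (Fin n) ℝ) (hS : S ∈ doublyStochastic ℝ (Fin n))
    (a b : Fin n → ℝ) (ha : ∀ i j : Fin n, i ≤ j → a j ≤ a i)
    (hb : ∀ i j : Fin n, i ≤ j → b j ≤ b i) :
    ∑ i, ∑ j, a i * b j * S i j ≤ ∑ i, a i * b i := by
  have hmono : Monovary a b := by
    intro i j hb'
    have hji : j < i := lt_of_not_ge fun h => absurd (hb i j h) (not_le.2 hb')
    exact ha j i hji.le
  obtain ⟨w, hw0, hw1, hwS⟩ := exists_eq_sum_perm_of_mem_doublyStochastic hS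
  have hentry : ∀ i j, S i j = ∑ σ : Equiv.Perm (Fin n), (if σ i = j then w σ else 0) := by
    intro i j
    rw [← hwS]
    simp [Matrix.sum_apply, Equiv.Perm.permMatrix, PEquiv.toMatrix_apply, Equiv.toPEquiv_apply,
      mul_ite, mul_one, mul_zero]
  calc ∑ i, ∑ j, a i * b j * S i j
      = ∑ σ : Equiv.Perm (Fin n), w σ * ∑ i, a i * b (σ i) := by
        simp_rw [hentry, Finset.mul_sum, Finset.sum_comm (γ := Equiv.Perm (Fin n))]
        refine Finset.sum_congr rfl fun σ _ => ?_
        rw [Finset.sum_comm]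
        refine Finset.sum_congr rfl fun i _ => ?_
        simp [mul_ite, mul_comm, mul_left_comm]
    _ ≤ ∑ σ : Equiv.Perm (Fin n), w σ * ∑ i, a i * b i := by
        refine Finset.sum_le_sum fun σ _ => mul_le_mul_of_nonneg_left ?_ (hw0 σ)
        simpa [smul_eq_mul] using hmono.sum_smul_comp_perm_le_sum_smul (σ := σ)
    _ = ∑ i, a i * b i := by rw [← Finset.sum_mul, hw1, one_mul]

/-- Fan's trace inequality ⟨X,Y⟩ = tr(XY) ≤ ⟨λ(X),λ(Y)⟩. -/
theorem fan_trace_inequality {n : ℕ} (X Y : Matrix (Fin n) (Fin n) ℝ)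
    (hX : X.IsSymm) (hY : Y.IsSymm) (a b : Fin n → ℝ)
    (ha : IsEigVec X a) (hb : IsEigVec Y b) :
    mInner X Y ≤ ∑ i, a i * b i := by
  obtain ⟨hamono, U, hU, hXeq⟩ := ha
  obtain ⟨hbmono, V, hV, hYeq⟩ := hb
  set Q : Matrix (Fin n) (Fin n) ℝ := Uᵀ * V with hQ
  have hU' : Uᵀ * U = 1 := mul_eq_one_comm.mp hU
  have hQt : Qᵀ = Vᵀ * U := by rw [hQ, Matrix.transpose_mul, Matrix.transpose_transpose]
  have hQQt : Q * Qᵀ = 1 := by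
    rw [hQt, hQ]
    calc Uᵀ * V * (Vᵀ * U) = Uᵀ * (V * Vᵀ) * U := by simp only [Matrix.mul_assoc]
      _ = 1 := by rw [hV, Matrix.mul_one, hU']
  have hQtQ : Qᵀ * Q = 1 := mul_eq_one_comm.mp hQQt
  have htr : mInner X Y = ∑ i, ∑ j, a i * b j * (Q i j ^ 2) := by
    have h1 : mInner X Y
        = Matrix.trace (Matrix.diagonal a * Q * Matrix.diagonal b * Qᵀ) := by
      rw [mInner, hXeq, hYeq, hQt, hQ]
      rw [show U * Matrix.diagonal a * Uᵀ * (V * Matrix.diagonal b * Vᵀ)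
          = U * (Matrix.diagonal a * (Uᵀ * V) * Matrix.diagonal b * Vᵀ) by simp only [Matrix.mul_assoc]]
      rw [Matrix.trace_mul_comm]
      congr 1
      simp only [Matrix.mul_assoc]
    rw [h1]
    have h2 : ∀ i j, (Matrix.diagonal a * Q * Matrix.diagonal b) i j = a i * Q i j * b j := by
      intro i j
      rw [Matrix.mul_diagonal, Matrix.diagonal_mul]
    simp only [Matrix.trace, Matrix.diag, Matrix.mul_apply, h2, Matrix.transpose_apply]
    refine Finset.sum_congr rfl fun i _ => Finset.sum_congr rfl fun j _ => ?_
    ring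
  rw [htr]
  have hS : (Matrix.of fun i j => Q i j ^ 2) ∈ doublyStochastic ℝ (Fin n) := by
    rw [mem_doublyStochastic_iff_sum]
    refine ⟨fun i j => sq_nonneg _, fun i => ?_, fun j => ?_⟩
    · have := congrFun (congrFun hQQt i) i
      simpa [Matrix.mul_apply, Matrix.one_apply, pow_two] using this
    · have := congrFun (congrFun hQtQ j) j
      simpa [Matrix.mul_apply, Matrix.one_apply, pow_two] using this
  exact ds_key _ hS a b hamono hbmono
end
end

section
/- Let C ⊆ Sⁿ be a spectral set, i.e. C = {X ∈ Sⁿ : λ(X) ∈ Θ} for a permutation-invariant set Θ ⊆ ℝⁿ. Then for every X ∈ Sⁿ, dist(X, C) = dist(λ(X), Θ). -/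
open Filter Topology Set Matrix

noncomputable section

namespace SpecAux

variable {n : ℕ}

lemma sq_sum_eq_trace (A : Matrix (Fin n) (Fin n) ℝ) :
    ∑ i, ∑ j, (A i j)^2 = Matrix.trace (A * Aᵀ) := by
  simp [Matrix.trace, Matrix.diag, Matrix.mul_apply, sq]

lemma trace_conj {U : Matrix (Fin n) (Fin n) ℝ} (hU : Uᵀ * U = 1)
    (A : Matrix (Fin n) (Fin n) ℝ) : Matrix.trace (U * A * Uᵀ) = Matrix.trace A := by
  rw [Matrix.trace_mul_comm, ← Matrix.mul_assoc, hU, Matrix.one_mul]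

lemma monovary_of_anti {a b : Fin n → ℝ} (ha : ∀ i j : Fin n, i ≤ j → a j ≤ a i)
    (hb : ∀ i j : Fin n, i ≤ j → b j ≤ b i) : Monovary a b := by
  intro i j h
  rcases le_or_gt i j with hij | hij
  · exact absurd (hb i j hij) (not_le.2 h)
  · exact ha j i hij.le

/-- von Neumann type trace inequality for symmetric matrices. -/
lemma trace_mul_le {X Z : Matrix (Fin n) (Fin n) ℝ} {a b : Fin n → ℝ}
    (hA : IsEigVec X a) (hB : IsEigVec Z b) :
    Matrix.trace (X * Z) ≤ ∑ i, a i * b i := by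
  obtain ⟨ha, U, hU, rfl⟩ := hA
  obtain ⟨hb, V, hV, rfl⟩ := hB
  have hU' : Uᵀ * U = 1 := mul_eq_one_comm.mp hU
  have hV' : Vᵀ * V = 1 := mul_eq_one_comm.mp hV
  set W : Matrix (Fin n) (Fin n) ℝ := Uᵀ * V with hW
  -- rewrite the product as a conjugation
  have key : (U * Matrix.diagonal a * Uᵀ) * (V * Matrix.diagonal b * Vᵀ)
      = U * (Matrix.diagonal a * W * Matrix.diagonal b * Wᵀ) * Uᵀ := by
    simp only [hW, Matrix.transpose_mul, Matrix.transpose_transpose, Matrix.mul_assoc]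
    rw [hU, Matrix.mul_one]
  rw [key, trace_conj hU']
  -- compute the trace as a sum
  have htr : Matrix.trace (Matrix.diagonal a * W * Matrix.diagonal b * Wᵀ)
      = ∑ i, ∑ j, a i * b j * (W i j)^2 := by
    have h1 : Matrix.diagonal a * W * Matrix.diagonal b
        = Matrix.of (fun i j => a i * W i j * b j) := by
      ext i j; simp [Matrix.mul_diagonal, Matrix.diagonal_mul]
    rw [h1]
    simp only [Matrix.trace, Matrix.diag, Matrix.mul_apply, Matrix.transpose_apply,
      Matrix.of_apply]
    exact Finset.sum_congr rfl fun i _ => Finset.sum_congr rfl fun j _ => by ring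
  rw [htr]
  -- the matrix of squares is doubly stochastic
  have hWW : W * Wᵀ = 1 := by
    simp only [hW, Matrix.transpose_mul, Matrix.transpose_transpose]
    rw [Matrix.mul_assoc, ← Matrix.mul_assoc V, hV, Matrix.one_mul, hU']
  have hWW' : Wᵀ * W = 1 := mul_eq_one_comm.mp hWW
  have hS : (Matrix.of fun i j => (W i j)^2) ∈ doublyStochastic ℝ (Fin n) := by
    rw [mem_doublyStochastic_iff_sum]
    refine ⟨fun i j => sq_nonneg _, fun i => ?_, fun j => ?_⟩
    · have := congrFun (congrFun hWW i) i
      simpa [Matrix.mul_apply, sq, Matrix.one_apply] using this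
    · have := congrFun (congrFun hWW' j) j
      simpa [Matrix.mul_apply, sq, Matrix.one_apply] using this
  obtain ⟨w, hw0, hw1, hwS⟩ := exists_eq_sum_perm_of_mem_doublyStochastic hS
  have hmono : Monovary a b := monovary_of_anti ha hb
  calc ∑ i, ∑ j, a i * b j * (W i j)^2
      = ∑ σ : Equiv.Perm (Fin n), w σ * ∑ i, a i * b (σ i) := by
        have hentry : ∀ i j, (W i j)^2 = ∑ σ : Equiv.Perm (Fin n),
            w σ * (σ.permMatrix ℝ i j) := by
          intro i j
          have := congrFun (congrFun hwS i) j
          simpa [Matrix.sum_apply] using this.symm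
        have hrow : ∀ i : Fin n, ∑ j, a i * b j * (W i j)^2
            = ∑ σ : Equiv.Perm (Fin n), w σ * (a i * b (σ i)) := by
          intro i
          simp only [hentry, Finset.mul_sum]
          rw [Finset.sum_comm]
          refine Finset.sum_congr rfl fun σ _ => ?_
          simp only [Equiv.Perm.permMatrix, PEquiv.toMatrix_apply, Equiv.toPEquiv_apply,
            Option.mem_def, Option.some.injEq, mul_ite, mul_one, mul_zero]
          rw [Finset.sum_ite_eq Finset.univ (σ i)]
          simp [mul_comm, mul_assoc, mul_left_comm]
        rw [Finset.sum_congr rfl fun i _ => hrow i, Finset.sum_comm]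
        exact Finset.sum_congr rfl fun σ _ => (Finset.mul_sum _ _ _).symm
    _ ≤ ∑ σ : Equiv.Perm (Fin n), w σ * ∑ i, a i * b i := by
        refine Finset.sum_le_sum fun σ _ => ?_
        exact mul_le_mul_of_nonneg_left (hmono.sum_mul_comp_perm_le_sum_mul) (hw0 σ)
    _ = ∑ i, a i * b i := by rw [← Finset.sum_mul, hw1, one_mul]

end SpecAux

namespace SpecAux

variable {n : ℕ}

lemma isSymm_of_eig {X : Matrix (Fin n) (Fin n) ℝ} {a : Fin n → ℝ}
    (hA : IsEigVec X a) : Xᵀ = X := by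
  obtain ⟨_, U, hU, rfl⟩ := hA
  simp [Matrix.transpose_mul, Matrix.diagonal_transpose, Matrix.mul_assoc]

lemma trace_sq {X : Matrix (Fin n) (Fin n) ℝ} {a : Fin n → ℝ}
    (hA : IsEigVec X a) : Matrix.trace (X * X) = ∑ i, (a i)^2 := by
  obtain ⟨_, U, hU, rfl⟩ := hA
  have hU' : Uᵀ * U = 1 := mul_eq_one_comm.mp hU
  have key : (U * Matrix.diagonal a * Uᵀ) * (U * Matrix.diagonal a * Uᵀ)
      = U * (Matrix.diagonal a * Matrix.diagonal a) * Uᵀ := by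
    simp only [Matrix.mul_assoc]
    rw [← Matrix.mul_assoc Uᵀ U, hU', Matrix.one_mul]
  rw [key, trace_conj hU', Matrix.diagonal_mul_diagonal, Matrix.trace_diagonal]
  exact Finset.sum_congr rfl fun i _ => (sq (a i)).symm

/-- Lidskii / Hoffman-Wielandt inequality. -/
lemma lidskii {X Z : Matrix (Fin n) (Fin n) ℝ} {a b : Fin n → ℝ}
    (hA : IsEigVec X a) (hB : IsEigVec Z b) : vnorm (a - b) ≤ fnorm (X - Z) := by
  refine Real.sqrt_le_sqrt ?_
  have hXs := isSymm_of_eig hA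
  have hZs := isSymm_of_eig hB
  have hR : ∑ i, ∑ j, ((X - Z) i j)^2
      = Matrix.trace (X * X) - 2 * Matrix.trace (X * Z) + Matrix.trace (Z * Z) := by
    rw [sq_sum_eq_trace]
    have : (X - Z)ᵀ = X - Z := by rw [Matrix.transpose_sub, hXs, hZs]
    rw [this, Matrix.sub_mul, Matrix.mul_sub, Matrix.mul_sub, Matrix.trace_sub,
      Matrix.trace_sub, Matrix.trace_sub, Matrix.trace_mul_comm Z X]
    ring
  have hL : ∑ i, ((a - b) i)^2
      = ∑ i, (a i)^2 - 2 * ∑ i, (a i * b i) + ∑ i, (b i)^2 := by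
    simp only [Pi.sub_apply, Finset.mul_sum, ← Finset.sum_add_distrib,
      ← Finset.sum_sub_distrib]
    exact Finset.sum_congr rfl fun i _ => by ring
  rw [hL, hR, trace_sq hA, trace_sq hB]
  have := trace_mul_le hA hB
  linarith

lemma fnorm_conj {U : Matrix (Fin n) (Fin n) ℝ} (hU : U * Uᵀ = 1)
    (A : Matrix (Fin n) (Fin n) ℝ) : fnorm (U * A * Uᵀ) = fnorm A := by
  have hU' : Uᵀ * U = 1 := mul_eq_one_comm.mp hU
  unfold fnorm
  congr 1
  rw [sq_sum_eq_trace, sq_sum_eq_trace]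
  have key : (U * A * Uᵀ) * (U * A * Uᵀ)ᵀ = U * (A * Aᵀ) * Uᵀ := by
    simp only [Matrix.transpose_mul, Matrix.transpose_transpose, Matrix.mul_assoc]
    rw [← Matrix.mul_assoc Uᵀ U, hU', Matrix.one_mul]
  rw [key, trace_conj hU']

lemma fnorm_diagonal (d : Fin n → ℝ) : fnorm (Matrix.diagonal d) = vnorm d := by
  unfold fnorm vnorm
  congr 1
  refine Finset.sum_congr rfl fun i _ => ?_
  rw [Finset.sum_eq_single i]
  · simp
  · intro j _ hj; simp [Matrix.diagonal_apply, (Ne.symm hj)]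
  · simp

/-- construction of the closest point in C. -/
lemma exists_close {X : Matrix (Fin n) (Fin n) ℝ} {a : Fin n → ℝ}
    (hA : IsEigVec X a) (y : Fin n → ℝ) :
    ∃ (Z : Matrix (Fin n) (Fin n) ℝ) (τ : Equiv.Perm (Fin n)),
      IsEigVec Z (y ∘ τ) ∧ fnorm (X - Z) = vnorm (a - y) := by
  obtain ⟨ha, U, hU, hXU⟩ := hA
  obtain ⟨τ, hanti⟩ : ∃ τ : Equiv.Perm (Fin n),
      ∀ i j : Fin n, i ≤ j → (y ∘ τ) j ≤ (y ∘ τ) i :=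
    ⟨Tuple.sort (fun i => -(y i)), fun i j hij => by
      simpa using Tuple.monotone_sort (fun i => -(y i)) hij⟩
  set Q : Matrix (Fin n) (Fin n) ℝ := Matrix.of (fun i j => if τ j = i then 1 else 0) with hQ
  have hQQ : Q * Qᵀ = 1 := by
    ext i j
    simp only [Matrix.mul_apply, Matrix.transpose_apply, hQ, Matrix.of_apply, ite_mul,
      one_mul, zero_mul]
    rw [Equiv.sum_comp τ (fun m => if m = i then (if m = j then (1:ℝ) else 0) else 0),
      Finset.sum_ite_eq' Finset.univ i]
    by_cases h : i = j <;> simp [Matrix.one_apply, h]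
  have hQD : Q * Matrix.diagonal (y ∘ τ) * Qᵀ = Matrix.diagonal y := by
    have h1 : Q * Matrix.diagonal (y ∘ τ) = Matrix.of (fun i k => if τ k = i then y (τ k) else 0) := by
      ext i k
      simp [hQ, Matrix.mul_diagonal]
    rw [h1]
    ext i j
    simp only [Matrix.mul_apply, Matrix.transpose_apply, hQ, Matrix.of_apply, ite_mul,
      one_mul, zero_mul, mul_ite, mul_one, mul_zero]
    rw [Equiv.sum_comp τ (fun m => if m = j then (if m = i then y m else 0) else 0),
      Finset.sum_ite_eq' Finset.univ j]
    rcases eq_or_ne i j with h | h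
    · subst h; simp [Matrix.diagonal_apply]
    · simp [Matrix.diagonal_apply, h, Ne.symm h]
  refine ⟨U * Matrix.diagonal y * Uᵀ, τ, ⟨hanti, U * Q, ?_, ?_⟩, ?_⟩
  · rw [Matrix.transpose_mul, Matrix.mul_assoc, ← Matrix.mul_assoc Q, hQQ,
      Matrix.one_mul, hU]
  · rw [Matrix.transpose_mul]
    calc U * Matrix.diagonal y * Uᵀ
        = U * (Q * Matrix.diagonal (y ∘ τ) * Qᵀ) * Uᵀ := by rw [hQD]
      _ = U * Q * Matrix.diagonal (y ∘ τ) * (Qᵀ * Uᵀ) := by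
          simp only [Matrix.mul_assoc]
  · rw [hXU]
    have : U * Matrix.diagonal a * Uᵀ - U * Matrix.diagonal y * Uᵀ
        = U * Matrix.diagonal (a - y) * Uᵀ := by
      have hd : Matrix.diagonal (a - y) = Matrix.diagonal a - Matrix.diagonal y := by
        ext i j
        rcases eq_or_ne i j with h | h <;> simp [Matrix.diagonal_apply, h]
      rw [hd, Matrix.mul_sub, Matrix.sub_mul]
    rw [this, fnorm_conj hU, fnorm_diagonal]

end SpecAux

/-- for a spectral set C = {X : λ(X) ∈ Θ}, dist(X,C) = dist(λ(X),Θ). -/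
theorem dist_spectral_set {n : ℕ} (Θ : Set (Fin n → ℝ))
    (hΘsym : ∀ (σ : Equiv.Perm (Fin n)) (x : Fin n → ℝ), x ∈ Θ → x ∘ σ ∈ Θ)
    (C : Set (Matrix (Fin n) (Fin n) ℝ))
    (hC : C = {X | ∃ a : Fin n → ℝ, IsEigVec X a ∧ a ∈ Θ})
    (X : Matrix (Fin n) (Fin n) ℝ) (hX : X.IsSymm)
    (a : Fin n → ℝ) (ha : IsEigVec X a) :
    sInf ((fun Z => fnorm (X - Z)) '' C) = sInf ((fun y => vnorm (a - y)) '' Θ) := by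

  rcases Set.eq_empty_or_nonempty Θ with hΘ | ⟨y₀, hy₀⟩
  · have hCe : C = ∅ := by
      rw [hC, hΘ]
      ext Z; simp
    rw [hCe, hΘ]
    simp
  · -- both images are nonempty and bounded below by 0
    have hbdd1 : BddBelow ((fun Z => fnorm (X - Z)) '' C) := by
      refine ⟨0, fun v hv => ?_⟩
      obtain ⟨Z, _, rfl⟩ := hv
      exact Real.sqrt_nonneg _
    have hbdd2 : BddBelow ((fun y => vnorm (a - y)) '' Θ) := by
      refine ⟨0, fun v hv => ?_⟩
      obtain ⟨y, _, rfl⟩ := hv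
      exact Real.sqrt_nonneg _
    have hne2 : ((fun y => vnorm (a - y)) '' Θ).Nonempty := ⟨_, ⟨y₀, hy₀, rfl⟩⟩
    have hne1 : ((fun Z => fnorm (X - Z)) '' C).Nonempty := by
      obtain ⟨Z, τ, hZe, _⟩ := SpecAux.exists_close ha y₀
      exact ⟨_, ⟨Z, by rw [hC]; exact ⟨y₀ ∘ τ, hZe, hΘsym τ y₀ hy₀⟩, rfl⟩⟩
    apply le_antisymm
    · -- sInf over C ≤ sInf over Θ
      refine le_csInf hne2 ?_
      rintro v ⟨y, hy, rfl⟩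
      obtain ⟨Z, τ, hZe, hZd⟩ := SpecAux.exists_close ha y
      have hZC : Z ∈ C := by rw [hC]; exact ⟨y ∘ τ, hZe, hΘsym τ y hy⟩
      calc sInf ((fun Z => fnorm (X - Z)) '' C) ≤ fnorm (X - Z) :=
            csInf_le hbdd1 ⟨Z, hZC, rfl⟩
        _ = vnorm (a - y) := hZd
    · -- sInf over Θ ≤ sInf over C
      refine le_csInf hne1 ?_
      rintro v ⟨Z, hZ, rfl⟩
      rw [hC] at hZ
      obtain ⟨b, hbe, hbΘ⟩ := hZ
      calc sInf ((fun y => vnorm (a - y)) '' Θ) ≤ vnorm (a - b) :=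
            csInf_le hbdd2 ⟨b, hbΘ, rfl⟩
        _ ≤ fnorm (X - Z) := SpecAux.lidskii ha hbe
end
end

section
/- Let C ⊆ Sⁿ be a spectral set C = {X : λ(X) ∈ Θ} with Θ symmetric, let X ∈ C and H ∈ T_C(X). Define S_H(p) = {W ∈ Sⁿ : λ″(X;H,W) + p ∈ T²_Θ(λ(X), λ′(X;H))}. Then S_H satisfies the uniform outer Lipschitz estimate S_H(p) ⊆ S_H(0) + ‖p‖·B for all p ∈ ℝⁿ, where B is the closed unit ball in Sⁿ. -/
open Filter Topology Set Matrix

noncomputable section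

section Helpers

open Polynomial

lemma ofFn_coe_multiset {n : ℕ} {α : Type*} (f : Fin n → α) :
    ((List.ofFn f : List α) : Multiset α) = Multiset.map f Finset.univ.val := by
  rw [List.ofFn_eq_map, Fin.univ_def]
  simp [Multiset.map_coe]

lemma exists_perm_of_map_eq {n : ℕ} {α : Type*} [LinearOrder α] (a b : Fin n → α)
    (h : Multiset.map a Finset.univ.val = Multiset.map b Finset.univ.val) :
    ∃ σ : Equiv.Perm (Fin n), ∀ i, b i = a (σ i) := by
  classical
  set σa := Tuple.sort a with hσa
  set σb := Tuple.sort b with hσb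
  have hma : Monotone (a ∘ σa) := Tuple.monotone_sort a
  have hmb : Monotone (b ∘ σb) := Tuple.monotone_sort b
  have hmul : ∀ (f : Fin n → α) (σ : Equiv.Perm (Fin n)),
      Multiset.map (f ∘ σ) Finset.univ.val = Multiset.map f Finset.univ.val := by
    intro f σ
    have h0 : Multiset.map (⇑σ) Finset.univ.val = Finset.univ.val := by
      have h1 := Finset.map_univ_equiv σ
      calc Multiset.map (⇑σ) Finset.univ.val
          = (Finset.map σ.toEmbedding Finset.univ).val := by rw [Finset.map_val]; rfl
        _ = Finset.univ.val := by rw [h1]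
    calc Multiset.map (f ∘ σ) Finset.univ.val
        = Multiset.map f (Multiset.map (⇑σ) Finset.univ.val) := by rw [Multiset.map_map]
      _ = Multiset.map f Finset.univ.val := by rw [h0]
  have hperm : List.Perm (List.ofFn (a ∘ σa)) (List.ofFn (b ∘ σb)) := by
    rw [← Multiset.coe_eq_coe, ofFn_coe_multiset, ofFn_coe_multiset, hmul, hmul, h]
  have heq : List.ofFn (a ∘ σa) = List.ofFn (b ∘ σb) :=
    List.Perm.eq_of_sortedLE (List.sortedLE_ofFn_iff.mpr hma) (List.sortedLE_ofFn_iff.mpr hmb) hperm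
  have hfun : a ∘ σa = b ∘ σb := List.ofFn_injective heq
  refine ⟨σb.symm.trans σa, fun i => ?_⟩
  have := congrFun hfun (σb.symm i)
  simpa using this.symm

lemma diag_sub_eq {n : ℕ} (a : Fin n → ℝ) (x : ℝ) :
    Matrix.diagonal (fun i => x - a i) = x • (1 : Matrix (Fin n) (Fin n) ℝ) - Matrix.diagonal a := by
  ext i j
  by_cases h : i = j <;> simp [Matrix.diagonal, Matrix.one_apply, h]

lemma det_conj_eq {n : ℕ} (U M : Matrix (Fin n) (Fin n) ℝ) (hU : U * Uᵀ = 1) :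
    (U * M * Uᵀ).det = M.det := by
  have h1 : U.det * Uᵀ.det = 1 := by rw [← Matrix.det_mul, hU, Matrix.det_one]
  rw [Matrix.det_mul, Matrix.det_mul]
  calc U.det * M.det * Uᵀ.det = M.det * (U.det * Uᵀ.det) := by ring
    _ = M.det := by rw [h1, mul_one]

lemma eig_multiset_eq {n : ℕ} (a b : Fin n → ℝ) (U V : Matrix (Fin n) (Fin n) ℝ)
    (hU : U * Uᵀ = 1) (hV : V * Vᵀ = 1)
    (h : U * Matrix.diagonal a * Uᵀ = V * Matrix.diagonal b * Vᵀ) :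
    Multiset.map a Finset.univ.val = Multiset.map b Finset.univ.val := by
  have key : ∀ x : ℝ, ∏ i, (x - a i) = ∏ i, (x - b i) := by
    intro x
    have ea : x • (1 : Matrix (Fin n) (Fin n) ℝ) - U * Matrix.diagonal a * Uᵀ
        = U * Matrix.diagonal (fun i => x - a i) * Uᵀ := by
      rw [diag_sub_eq, Matrix.mul_sub, Matrix.sub_mul]
      congr 1
      rw [Matrix.mul_smul, Matrix.smul_mul, Matrix.mul_one, hU]
    have eb : x • (1 : Matrix (Fin n) (Fin n) ℝ) - V * Matrix.diagonal b * Vᵀ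
        = V * Matrix.diagonal (fun i => x - b i) * Vᵀ := by
      rw [diag_sub_eq, Matrix.mul_sub, Matrix.sub_mul]
      congr 1
      rw [Matrix.mul_smul, Matrix.smul_mul, Matrix.mul_one, hV]
    calc ∏ i, (x - a i) = (Matrix.diagonal (fun i => x - a i)).det := (Matrix.det_diagonal).symm
      _ = (U * Matrix.diagonal (fun i => x - a i) * Uᵀ).det := (det_conj_eq _ _ hU).symm
      _ = (x • (1 : Matrix (Fin n) (Fin n) ℝ) - U * Matrix.diagonal a * Uᵀ).det := by rw [ea]
      _ = (x • (1 : Matrix (Fin n) (Fin n) ℝ) - V * Matrix.diagonal b * Vᵀ).det := by rw [h]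
      _ = (V * Matrix.diagonal (fun i => x - b i) * Vᵀ).det := by rw [eb]
      _ = (Matrix.diagonal (fun i => x - b i)).det := det_conj_eq _ _ hV
      _ = ∏ i, (x - b i) := Matrix.det_diagonal
  have hpoly : (∏ i, (X - C (a i)) : ℝ[X]) = ∏ i, (X - C (b i)) := by
    apply Polynomial.funext
    intro x
    simpa [Polynomial.eval_prod] using key x
  have ra : (∏ i, (X - C (a i)) : ℝ[X]).roots = Multiset.map a Finset.univ.val := by
    have h2 : (∏ i, (X - C (a i)) : ℝ[X])
        = ((Multiset.map a Finset.univ.val).map fun r => X - C r).prod := by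
      rw [Multiset.map_map]
      rfl
    rw [h2, Polynomial.roots_multiset_prod_X_sub_C]
  have rb : (∏ i, (X - C (b i)) : ℝ[X]).roots = Multiset.map b Finset.univ.val := by
    have h2 : (∏ i, (X - C (b i)) : ℝ[X])
        = ((Multiset.map b Finset.univ.val).map fun r => X - C r).prod := by
      rw [Multiset.map_map]
      rfl
    rw [h2, Polynomial.roots_multiset_prod_X_sub_C]
  rw [← ra, ← rb, hpoly]

lemma conj_isSymm {n : ℕ} (U : Matrix (Fin n) (Fin n) ℝ) (d : Fin n → ℝ) :
    (U * Matrix.diagonal d * Uᵀ).IsSymm := by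
  unfold Matrix.IsSymm
  rw [Matrix.transpose_mul, Matrix.transpose_mul, Matrix.transpose_transpose,
    Matrix.diagonal_transpose, Matrix.mul_assoc]

lemma trace_sq {n : ℕ} (A : Matrix (Fin n) (Fin n) ℝ) :
    Matrix.trace (A * Aᵀ) = ∑ i, ∑ j, (A i j) ^ 2 := by
  simp [Matrix.trace, Matrix.mul_apply, Matrix.diag, sq, Matrix.transpose_apply]

lemma fnorm_conj {n : ℕ} (U : Matrix (Fin n) (Fin n) ℝ) (p : Fin n → ℝ)
    (hU : U * Uᵀ = 1) : fnorm (U * Matrix.diagonal p * Uᵀ) = vnorm p := by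
  have hU' : Uᵀ * U = 1 := mul_eq_one_comm.mp hU
  set A := U * Matrix.diagonal p * Uᵀ with hA
  have hAs : Aᵀ = A := conj_isSymm U p
  have key : Matrix.trace (A * Aᵀ) = ∑ i, (p i) ^ 2 := by
    rw [hAs]
    have h3 : A * A = U * (Matrix.diagonal p * Matrix.diagonal p) * Uᵀ := by
      rw [hA]
      calc U * Matrix.diagonal p * Uᵀ * (U * Matrix.diagonal p * Uᵀ)
          = U * Matrix.diagonal p * (Uᵀ * U) * Matrix.diagonal p * Uᵀ := by
            simp only [Matrix.mul_assoc]
        _ = U * (Matrix.diagonal p * Matrix.diagonal p) * Uᵀ := by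
            rw [hU']; simp only [Matrix.mul_one, Matrix.mul_assoc]
    rw [h3, Matrix.trace_mul_comm, ← Matrix.mul_assoc, hU', Matrix.one_mul,
      Matrix.diagonal_mul_diagonal, Matrix.trace_diagonal]
    exact Finset.sum_congr rfl (fun i _ => (sq (p i)).symm)
  have h2 := trace_sq A
  rw [hAs] at h2
  unfold fnorm vnorm
  rw [← h2]; rw [hAs] at key; rw [key]

lemma exists_const_subseq {α : Type*} [Finite α] (f : ℕ → α) :
    ∃ (a : α) (φ : ℕ → ℕ), StrictMono φ ∧ ∀ k, f (φ k) = a := by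
  obtain ⟨a, ha⟩ := Finite.exists_infinite_fiber f
  have hinf : {k | f k = a}.Infinite := by
    rw [← Set.infinite_coe_iff]
    exact ha
  have hfreq : ∃ᶠ k in Filter.atTop, f k = a := Nat.frequently_atTop_iff_infinite.mpr hinf
  obtain ⟨φ, hφ, hfa⟩ := Filter.extraction_of_frequently_atTop hfreq
  exact ⟨a, φ, hφ, hfa⟩

lemma conj_add_smul {n : ℕ} (U : Matrix (Fin n) (Fin n) ℝ) (μ p : Fin n → ℝ) (c : ℝ) :
    U * Matrix.diagonal μ * Uᵀ + c • (U * Matrix.diagonal p * Uᵀ)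
      = U * Matrix.diagonal (fun i => μ i + c * p i) * Uᵀ := by
  have h1 : Matrix.diagonal (fun i => μ i + c * p i)
      = Matrix.diagonal μ + c • Matrix.diagonal p := by
    ext i j
    by_cases h : i = j <;> simp [Matrix.diagonal, h]
  rw [h1, Matrix.mul_add, Matrix.add_mul]
  congr 1
  rw [Matrix.mul_smul, Matrix.smul_mul]

end Helpers

/-- the second-order tangential approximation mapping
S_H(p) = {W : λ″(X;H,W) + p ∈ T²_Θ(λ(X),λ′(X;H))} of a spectral set satisfies the
uniform outer Lipschitz estimate S_H(p) ⊆ S_H(0) + ‖p‖·B. -/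
theorem SH_outer_lipschitz {n : ℕ}
    (Θ : Set (Fin n → ℝ))
    (hΘsym : ∀ (σ : Equiv.Perm (Fin n)) (x : Fin n → ℝ), x ∈ Θ → x ∘ σ ∈ Θ)
    (lam : Matrix (Fin n) (Fin n) ℝ → Fin n → ℝ)
    (hlam : ∀ X : Matrix (Fin n) (Fin n) ℝ, X.IsSymm → IsEigVec X (lam X))
    (C : Set (Matrix (Fin n) (Fin n) ℝ))
    (hC : C = {X | X.IsSymm ∧ lam X ∈ Θ})
    (X : Matrix (Fin n) (Fin n) ℝ) (hXC : X ∈ C)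
    (H : Matrix (Fin n) (Fin n) ℝ) (hHt : H ∈ tcone C X)
    (d : Fin n → ℝ)
    (hd : ∀ i, Filter.Tendsto (fun t : ℝ => (lam (X + t • H) i - lam X i) / t)
      (nhdsWithin 0 (Set.Ioi 0)) (nhds (d i)))
    (lam2 : Matrix (Fin n) (Fin n) ℝ → Fin n → ℝ)
    (hexp : ∀ W : Matrix (Fin n) (Fin n) ℝ, W.IsSymm →
      ∀ γ : ℝ → Matrix (Fin n) (Fin n) ℝ, (∀ t, (γ t).IsSymm) →
      Filter.Tendsto (fun t : ℝ => (t ^ 2)⁻¹ • γ t) (nhdsWithin 0 (Set.Ioi 0)) (nhds 0) →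
      ∀ i, Filter.Tendsto
        (fun t : ℝ =>
          (lam (X + t • H + (t ^ 2 / 2) • W + γ t) i - lam X i - t * d i) / (t ^ 2 / 2))
        (nhdsWithin 0 (Set.Ioi 0)) (nhds (lam2 W i)))
    (p : Fin n → ℝ) (W : Matrix (Fin n) (Fin n) ℝ)
    (hW : W.IsSymm ∧ (fun i => lam2 W i + p i) ∈ tcone2 Θ (lam X) d) :
    ∃ W₀ : Matrix (Fin n) (Fin n) ℝ,
      (W₀.IsSymm ∧ lam2 W₀ ∈ tcone2 Θ (lam X) d) ∧ fnorm (W - W₀) ≤ vnorm p := by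
  classical
  have hXmem : X.IsSymm ∧ lam X ∈ Θ := by rw [hC] at hXC; exact hXC
  obtain ⟨hXs, hXΘ⟩ := hXmem
  have hWs := hW.1
  obtain ⟨tk, vk, htkpos, htk0, hvk, hvkmem⟩ := hW.2
  -- H is symmetric
  have hHs : H.IsSymm := by
    obtain ⟨t, v, htpos, ht0, hv, hmem⟩ := hHt
    have hvs : ∀ k, (v k).IsSymm := by
      intro k
      have h1 : (X + t k • v k).IsSymm := by
        have := hmem k; rw [hC] at this; exact this.1
      have h2 : v k = (t k)⁻¹ • (X + t k • v k - X) := by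
        rw [add_sub_cancel_left, smul_smul, inv_mul_cancel₀ (ne_of_gt (htpos k)), one_smul]
      rw [h2]
      exact (h1.sub hXs).smul _
    apply Matrix.IsSymm.ext
    intro i j
    have e1 : Tendsto (fun k => v k i j) atTop (nhds (H i j)) :=
      tendsto_pi_nhds.mp (tendsto_pi_nhds.mp hv i) j
    have e2 : Tendsto (fun k => v k j i) atTop (nhds (H j i)) :=
      tendsto_pi_nhds.mp (tendsto_pi_nhds.mp hv j) i
    have e3 : (fun k => v k i j) = fun k => v k j i := by
      funext k
      exact (Matrix.IsSymm.apply (hvs k) j i).symm ▸ rfl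
    rw [e3] at e1
    exact tendsto_nhds_unique e2 e1
  -- base sequence
  set t0 : ℕ → ℝ := fun k => 1 / (k + 1) with ht0def
  have ht0pos : ∀ k, 0 < t0 k := fun k => by positivity
  have ht0anti : StrictAnti t0 := by
    intro a b hab
    apply one_div_lt_one_div_of_lt
    · positivity
    · have : (a : ℝ) < b := by exact_mod_cast hab
      linarith
  have ht0lim : Tendsto t0 atTop (nhds 0) := tendsto_one_div_add_atTop_nhds_zero_nat
  set A : ℕ → Matrix (Fin n) (Fin n) ℝ := fun k => X + t0 k • H + (t0 k ^ 2 / 2) • W with hAdef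
  have hAs : ∀ k, (A k).IsSymm := fun k => (hXs.add (hHs.smul _)).add (hWs.smul _)
  have hUex : ∀ k, ∃ U : Matrix (Fin n) (Fin n) ℝ, U * Uᵀ = 1 ∧
      A k = U * Matrix.diagonal (lam (A k)) * Uᵀ := fun k => (hlam (A k) (hAs k)).2
  choose U hUo hUd using hUex
  -- compactness: extract convergent subsequence of frames
  have hKcomp : IsCompact {M : Matrix (Fin n) (Fin n) ℝ | ∀ i j, M i j ∈ Set.Icc (-1:ℝ) 1} := by
    have h : {M : Matrix (Fin n) (Fin n) ℝ | ∀ i j, M i j ∈ Set.Icc (-1:ℝ) 1}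
        = Set.pi Set.univ (fun _ : Fin n => Set.pi Set.univ (fun _ : Fin n => Set.Icc (-1:ℝ) 1)) := by
      ext M
      constructor
      · intro hM i _ j _
        exact hM i j
      · intro hM i j
        exact hM i (Set.mem_univ i) j (Set.mem_univ j)
    rw [h]
    exact isCompact_univ_pi (fun i => isCompact_univ_pi (fun j => isCompact_Icc))
  have hUbd : ∀ k, U k ∈ {M : Matrix (Fin n) (Fin n) ℝ | ∀ i j, M i j ∈ Set.Icc (-1:ℝ) 1} := by
    intro k i j
    have h1 : (U k * (U k)ᵀ) i i = 1 := by rw [hUo k]; simp [Matrix.one_apply]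
    rw [Matrix.mul_apply] at h1
    have h2 : ∑ l, U k i l * (U k)ᵀ l i = ∑ l, (U k i l) ^ 2 :=
      Finset.sum_congr rfl (fun l _ => by rw [Matrix.transpose_apply, sq])
    have h3 : (U k i j) ^ 2 ≤ 1 := by
      rw [h2] at h1
      rw [← h1]
      exact Finset.single_le_sum (f := fun l => (U k i l) ^ 2)
        (fun l _ => sq_nonneg _) (Finset.mem_univ j)
    constructor
    · nlinarith
    · nlinarith
  haveI : FirstCountableTopology (Matrix (Fin n) (Fin n) ℝ) :=
    inferInstanceAs (FirstCountableTopology (Fin n → Fin n → ℝ))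
  obtain ⟨Uoo, -, φ1, hφ1, hU1⟩ := hKcomp.tendsto_subseq hUbd
  have hUooo : Uoo * Uooᵀ = 1 := by
    have hc : Continuous (fun M : Matrix (Fin n) (Fin n) ℝ => M * Mᵀ) :=
      continuous_id.matrix_mul continuous_id.matrix_transpose
    have h5 : Tendsto (fun k => U (φ1 k) * (U (φ1 k))ᵀ) atTop (nhds (Uoo * Uooᵀ)) :=
      (hc.tendsto Uoo).comp hU1
    have h6 : (fun k => U (φ1 k) * (U (φ1 k))ᵀ) = fun _ => (1 : Matrix (Fin n) (Fin n) ℝ) :=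
      funext fun k => hUo (φ1 k)
    have h7 : Tendsto (fun k => U (φ1 k) * (U (φ1 k))ᵀ) atTop
        (nhds (1 : Matrix (Fin n) (Fin n) ℝ)) := by rw [h6]; exact tendsto_const_nhds
    exact tendsto_nhds_unique h5 h7
  set s : ℕ → ℝ := fun k => t0 (φ1 k) with hsdef
  have hspos : ∀ k, 0 < s k := fun k => ht0pos _
  have hsanti : StrictAnti s := fun a b hab => ht0anti (hφ1 hab)
  have hsinj : Function.Injective s := hsanti.injective
  have hslim : Tendsto s atTop (nhds 0) := ht0lim.comp hφ1.tendsto_atTop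
  set Δ : Matrix (Fin n) (Fin n) ℝ := Uoo * Matrix.diagonal p * Uooᵀ with hΔdef
  set W₀ : Matrix (Fin n) (Fin n) ℝ := W + Δ with hW₀def
  have hW₀s : W₀.IsSymm := hWs.add (conj_isSymm Uoo p)
  set Q : ℕ → Matrix (Fin n) (Fin n) ℝ :=
    fun k => U (φ1 k) * Matrix.diagonal p * (U (φ1 k))ᵀ with hQdef
  have hQlim : Tendsto Q atTop (nhds Δ) := by
    have hc : Continuous (fun M : Matrix (Fin n) (Fin n) ℝ => M * Matrix.diagonal p * Mᵀ) :=
      (continuous_id.matrix_mul continuous_const).matrix_mul continuous_id.matrix_transpose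
    exact (hc.tendsto Uoo).comp hU1
  set Vt : ℝ → Matrix (Fin n) (Fin n) ℝ :=
    fun t => if h : ∃ k, s k = t then U (φ1 h.choose) else Uoo with hVdef
  set γ : ℝ → Matrix (Fin n) (Fin n) ℝ :=
    fun t => (t ^ 2 / 2) • (Vt t * Matrix.diagonal p * (Vt t)ᵀ - Δ) with hγdef
  have hVs : ∀ k, Vt (s k) = U (φ1 k) := by
    intro k
    have hex : ∃ m, s m = s k := ⟨k, rfl⟩
    have hch : hex.choose = k := hsinj hex.choose_spec
    simp only [hVdef, dif_pos hex, hch]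
  have hγs : ∀ k, γ (s k) = (s k ^ 2 / 2) • (Q k - Δ) := by
    intro k
    simp only [hγdef, hVs k, hQdef]
  have hγsymm : ∀ t, (γ t).IsSymm :=
    fun t => ((conj_isSymm (Vt t) p).sub (conj_isSymm Uoo p)).smul _
  have hγo : Tendsto (fun t : ℝ => (t ^ 2)⁻¹ • γ t) (nhdsWithin 0 (Set.Ioi 0)) (nhds 0) := by
    apply tendsto_pi_nhds.mpr
    intro i
    rw [tendsto_pi_nhds]
    intro j
    rw [Metric.tendsto_nhdsWithin_nhds]
    intro ε hε
    have hQij : Tendsto (fun k => Q k i j - Δ i j) atTop (nhds 0) := by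
      have := tendsto_pi_nhds.mp (tendsto_pi_nhds.mp hQlim i) j
      simpa using this.sub_const (Δ i j)
    obtain ⟨K, hK⟩ := Metric.tendsto_atTop.mp hQij ε hε
    refine ⟨s K, hspos K, ?_⟩
    intro t ht hdist
    by_cases hex : ∃ k, s k = t
    · obtain ⟨k, rfl⟩ := hex
      have hkK : K ≤ k := by
        by_contra hcon
        push_neg at hcon
        have : s K < s k := hsanti hcon
        rw [Real.dist_eq, sub_zero, abs_of_pos (hspos k)] at hdist
        linarith
      have hv := hK k hkK
      rw [Real.dist_eq, sub_zero] at hv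
      have hne : s k ≠ 0 := ne_of_gt (hspos k)
      have hval : ((s k ^ 2)⁻¹ • γ (s k)) i j = (1/2) * (Q k i j - Δ i j) := by
        rw [hγs k]
        have : (s k ^ 2)⁻¹ • ((s k ^ 2 / 2) • (Q k - Δ)) = (1/2 : ℝ) • (Q k - Δ) := by
          rw [smul_smul]
          congr 1
          field_simp
        rw [this]
        simp [Matrix.smul_apply, Matrix.sub_apply, smul_eq_mul]
      have hz : (0 : Matrix (Fin n) (Fin n) ℝ) i j = 0 := rfl
      calc dist (((s k ^ 2)⁻¹ • γ (s k)) i j) ((0 : Matrix (Fin n) (Fin n) ℝ) i j)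
          = |(1/2) * (Q k i j - Δ i j)| := by rw [hval, hz, Real.dist_eq, sub_zero]
        _ ≤ |Q k i j - Δ i j| := by
            rw [abs_mul, abs_of_pos (by norm_num : (0:ℝ) < 1/2)]
            nlinarith [abs_nonneg (Q k i j - Δ i j)]
        _ < ε := hv
    · have hV0 : Vt t = Uoo := by simp only [hVdef, dif_neg hex]
      have hγ0 : γ t = 0 := by
        simp only [hγdef, hV0, ← hΔdef, sub_self, smul_zero]
      have : ((t ^ 2)⁻¹ • γ t) i j = 0 := by rw [hγ0, smul_zero]; rfl
      rw [this]
      simpa using hε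
  -- the limits from hexp
  have hzeroSymm : ∀ t : ℝ, ((fun _ : ℝ => (0 : Matrix (Fin n) (Fin n) ℝ)) t).IsSymm :=
    fun _ => Matrix.isSymm_zero
  have hzero_o : Tendsto (fun t : ℝ => (t ^ 2)⁻¹ • ((fun _ : ℝ => (0 : Matrix (Fin n) (Fin n) ℝ)) t))
      (nhdsWithin 0 (Set.Ioi 0)) (nhds 0) := by
    simpa using (tendsto_const_nhds :
      Tendsto (fun _ : ℝ => (0 : Matrix (Fin n) (Fin n) ℝ)) (nhdsWithin 0 (Set.Ioi 0)) (nhds 0))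
  have hL := hexp W₀ hW₀s γ hγsymm hγo
  have hr := hexp W hWs (fun _ => 0) hzeroSymm hzero_o
  -- parabolic curve matrices
  set M : ℕ → Matrix (Fin n) (Fin n) ℝ :=
    fun k => X + s k • H + (s k ^ 2 / 2) • W₀ + γ (s k) with hMdef
  set b : ℕ → Fin n → ℝ := fun k i => lam (A (φ1 k)) i + (s k ^ 2 / 2) * p i with hbdef
  have hMconj : ∀ k, M k = U (φ1 k) * Matrix.diagonal (b k) * (U (φ1 k))ᵀ := by
    intro k
    have h1 : M k = A (φ1 k) + (s k ^ 2 / 2) • Q k := by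
      rw [hMdef]; dsimp only; rw [hγs k]
      simp only [hMdef, hγs, hW₀def, hAdef, hsdef]
      module
    rw [h1, hUd (φ1 k)]
    exact conj_add_smul _ _ _ _
  have hMsymm : ∀ k, (M k).IsSymm := by
    intro k
    rw [hMconj k]
    exact conj_isSymm _ _
  have hMeig : ∀ k, ∃ σ : Equiv.Perm (Fin n), ∀ i, lam (M k) i = b k (σ i) := by
    intro k
    obtain ⟨Vk, hVo, hVd⟩ := (hlam (M k) (hMsymm k)).2
    have hmul := eig_multiset_eq (b k) (lam (M k)) (U (φ1 k)) Vk (hUo _) hVo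
      (by rw [← hMconj k, ← hVd])
    exact exists_perm_of_map_eq _ _ hmul
  choose σs hσs using hMeig
  obtain ⟨σ, φ2, hφ2, hσ⟩ := exists_const_subseq σs
  set ss : ℕ → ℝ := fun k => s (φ2 k) with hssdef
  have hsspos : ∀ k, 0 < ss k := fun k => hspos _
  have hss : Tendsto ss atTop (nhdsWithin 0 (Set.Ioi 0)) := by
    rw [tendsto_nhdsWithin_iff]
    exact ⟨hslim.comp hφ2.tendsto_atTop, Eventually.of_forall fun k => hspos _⟩
  have hkey : ∀ i, lam X (σ i) = lam X i ∧ d (σ i) = d i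
      ∧ lam2 W₀ i = lam2 W (σ i) + p (σ i) := by
    intro i
    have hF : Tendsto (fun k => (lam (M (φ2 k)) i - lam X i - ss k * d i) / (ss k ^ 2 / 2))
        atTop (nhds (lam2 W₀ i)) := (hL i).comp hss
    have hrj : Tendsto
        (fun k => (lam (A (φ1 (φ2 k))) (σ i) - lam X (σ i) - ss k * d (σ i)) / (ss k ^ 2 / 2))
        atTop (nhds (lam2 W (σ i))) := by
      have h1 := (hr (σ i)).comp hss
      have h2 : (fun t : ℝ => (lam (X + t • H + (t ^ 2 / 2) • W + 0) (σ i) - lam X (σ i)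
          - t * d (σ i)) / (t ^ 2 / 2)) ∘ ss
          = fun k => (lam (A (φ1 (φ2 k))) (σ i) - lam X (σ i) - ss k * d (σ i)) / (ss k ^ 2 / 2) := by
        funext k
        simp only [Function.comp_apply, hAdef, add_zero, hssdef, hsdef]
      rw [h2] at h1
      exact h1
    have hbval : ∀ k, lam (M (φ2 k)) i = lam (A (φ1 (φ2 k))) (σ i) + (ss k ^ 2 / 2) * p (σ i) := by
      intro k
      have := hσs (φ2 k) i
      rw [hσ k] at this
      rw [this]
    set c1 := lam X (σ i) - lam X i with hc1def
    set c2 := d (σ i) - d i with hc2def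
    have hg : ∀ k, (lam (M (φ2 k)) i - lam X i - ss k * d i) / (ss k ^ 2 / 2)
        - ((lam (A (φ1 (φ2 k))) (σ i) - lam X (σ i) - ss k * d (σ i)) / (ss k ^ 2 / 2) + p (σ i))
        = 2 * c1 / ss k ^ 2 + 2 * c2 / ss k := by
      intro k
      have hne : ss k ≠ 0 := ne_of_gt (hsspos k)
      rw [hbval k, hc1def, hc2def]
      field_simp
      ring
    have hG : Tendsto (fun k => 2 * c1 / ss k ^ 2 + 2 * c2 / ss k) atTop
        (nhds (lam2 W₀ i - (lam2 W (σ i) + p (σ i)))) := by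
      have h1 := hF.sub (hrj.add_const (p (σ i)))
      have h2 : (fun k => (lam (M (φ2 k)) i - lam X i - ss k * d i) / (ss k ^ 2 / 2)
          - ((lam (A (φ1 (φ2 k))) (σ i) - lam X (σ i) - ss k * d (σ i)) / (ss k ^ 2 / 2) + p (σ i)))
          = fun k => 2 * c1 / ss k ^ 2 + 2 * c2 / ss k := funext hg
      rw [h2] at h1
      exact h1
    have hsslim : Tendsto ss atTop (nhds 0) := hslim.comp hφ2.tendsto_atTop
    have hss2lim : Tendsto (fun k => ss k ^ 2) atTop (nhds 0) := by
      have := hsslim.mul hsslim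
      simpa [sq] using this
    have hc1 : c1 = 0 := by
      have h1 : Tendsto (fun k => ss k ^ 2 * (2 * c1 / ss k ^ 2 + 2 * c2 / ss k)) atTop
          (nhds 0) := by
        have := hss2lim.mul hG
        simpa using this
      have h2 : (fun k => ss k ^ 2 * (2 * c1 / ss k ^ 2 + 2 * c2 / ss k))
          = fun k => 2 * c1 + 2 * c2 * ss k := by
        funext k
        have hne : ss k ≠ 0 := ne_of_gt (hsspos k)
        field_simp
      rw [h2] at h1
      have h3 : Tendsto (fun k => 2 * c1 + 2 * c2 * ss k) atTop (nhds (2 * c1)) := by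
        have h3' : Tendsto (fun k => 2 * c1 + 2 * c2 * ss k) atTop (nhds (2 * c1 + 2 * c2 * 0)) :=
          tendsto_const_nhds.add (tendsto_const_nhds.mul hsslim)
        simpa using h3'
      have := tendsto_nhds_unique h1 h3
      linarith
    have hc2 : c2 = 0 := by
      have h1 : Tendsto (fun k => ss k * (2 * c1 / ss k ^ 2 + 2 * c2 / ss k)) atTop
          (nhds 0) := by
        have := hsslim.mul hG
        simpa using this
      have h2 : (fun k => ss k * (2 * c1 / ss k ^ 2 + 2 * c2 / ss k)) = fun _ => 2 * c2 := by
        funext k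
        have hne : ss k ≠ 0 := ne_of_gt (hsspos k)
        rw [hc1]
        field_simp
        ring
      rw [h2] at h1
      have h3 : Tendsto (fun _ : ℕ => 2 * c2) atTop (nhds (2 * c2)) := tendsto_const_nhds
      have := tendsto_nhds_unique h1 h3
      linarith
    have hGz : (fun k => 2 * c1 / ss k ^ 2 + 2 * c2 / ss k) = fun _ => (0 : ℝ) := by
      funext k
      rw [hc1, hc2]
      simp
    rw [hGz] at hG
    have h4 : lam2 W₀ i - (lam2 W (σ i) + p (σ i)) = 0 :=
      (tendsto_nhds_unique (tendsto_const_nhds : Tendsto (fun _ : ℕ => (0:ℝ)) atTop (nhds 0)) hG).symm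
    have e1 : lam X (σ i) - lam X i = 0 := hc1def.symm.trans hc1
    have e2 : d (σ i) - d i = 0 := hc2def.symm.trans hc2
    exact ⟨by linarith, by linarith, by linarith⟩
  have hx : ∀ i, lam X (σ i) = lam X i := fun i => (hkey i).1
  have hdσ : ∀ i, d (σ i) = d i := fun i => (hkey i).2.1
  have hW₀val : ∀ i, lam2 W₀ i = lam2 W (σ i) + p (σ i) := fun i => (hkey i).2.2
  refine ⟨W₀, ⟨hW₀s, ?_⟩, ?_⟩
  · refine ⟨tk, fun k => fun i => vk k (σ i), htkpos, htk0, ?_, ?_⟩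
    · rw [tendsto_pi_nhds]
      intro i
      have h1 := tendsto_pi_nhds.mp hvk (σ i)
      rw [hW₀val i]
      exact h1
    · intro k
      have hfun : lam X + tk k • d + (tk k ^ 2 / 2) • (fun i => vk k (σ i))
          = (fun i => (lam X + tk k • d + (tk k ^ 2 / 2) • vk k) (σ i)) := by
        funext i
        simp only [Pi.add_apply, Pi.smul_apply, smul_eq_mul, hx i, hdσ i]
      rw [hfun]
      exact hΘsym σ _ (hvkmem k)
  · have hsub : W - W₀ = -Δ := by rw [hW₀def, sub_add_cancel_left]
    rw [hsub]
    have hfn : fnorm (-Δ) = fnorm Δ := by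
      unfold fnorm
      congr 1
      refine Finset.sum_congr rfl fun i _ => Finset.sum_congr rfl fun j _ => ?_
      simp [Matrix.neg_apply]
    rw [hfn, hΔdef, fnorm_conj _ _ hUooo]
end
end

section
/- Let C ⊆ Sⁿ be a spectral set C = {X : λ(X) ∈ Θ} with Θ ⊆ ℝⁿ symmetric, X ∈ C and H ∈ T_C(X). Then the second-order tangent set satisfies the chain rule T²_C(X,H) = {W ∈ Sⁿ : λ″(X;H,W) ∈ T²_Θ(λ(X), λ′(X;H))}. -/
open Filter Topology Set Matrix

noncomputable section

/-! ### Auxiliary lemmas -/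

lemma exists_sort_perm {n : ℕ} (x : Fin n → ℝ) :
    ∃ σ : Equiv.Perm (Fin n), ∀ i j : Fin n, i ≤ j → (x ∘ σ) j ≤ (x ∘ σ) i := by
  refine ⟨Fin.revPerm.trans (Tuple.sort x), fun i j hij => ?_⟩
  have := Tuple.monotone_sort x
  simp only [Function.comp, Equiv.trans_apply, Fin.revPerm_apply]
  exact this (show Fin.rev j ≤ Fin.rev i from Fin.rev_le_rev.mpr hij)

lemma exists_ge_of_card {n : ℕ} (S : Finset (Fin n)) (i : Fin n) (h : (i : ℕ) + 1 ≤ S.card) :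
    ∃ j ∈ S, i ≤ j := by
  by_contra hc
  push_neg at hc
  have hsub : S ⊆ Finset.Iio i := fun j hj => Finset.mem_Iio.mpr (hc j hj)
  have := Finset.card_le_card hsub
  rw [Fin.card_Iio] at this
  omega

lemma sorted_le_of_perm {n : ℕ} (a b : Fin n → ℝ) (ε : ℝ)
    (ha : ∀ i j : Fin n, i ≤ j → a j ≤ a i) (hb : ∀ i j : Fin n, i ≤ j → b j ≤ b i)
    (σ : Equiv.Perm (Fin n)) (h : ∀ j, a j ≤ b (σ j) + ε) (i : Fin n) : a i ≤ b i + ε := by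
  set S : Finset (Fin n) := (Finset.Iic i).image σ with hS
  have hcard : (i : ℕ) + 1 ≤ S.card := by
    rw [hS, Finset.card_image_of_injective _ σ.injective, Fin.card_Iic]
  obtain ⟨m, hmS, him⟩ := exists_ge_of_card S i hcard
  obtain ⟨j, hj, rfl⟩ := Finset.mem_image.mp hmS
  have hji : j ≤ i := Finset.mem_Iic.mp hj
  calc a i ≤ a j := ha j i hji
    _ ≤ b (σ j) + ε := h j
    _ ≤ b i + ε := by linarith [hb i (σ j) him]

lemma sorted_abs_of_perm {n : ℕ} (a b : Fin n → ℝ) (ε : ℝ)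
    (ha : ∀ i j : Fin n, i ≤ j → a j ≤ a i) (hb : ∀ i j : Fin n, i ≤ j → b j ≤ b i)
    (σ : Equiv.Perm (Fin n)) (h : ∀ j, |a j - b (σ j)| ≤ ε) (i : Fin n) : |a i - b i| ≤ ε := by
  rw [abs_le]
  constructor
  · have := sorted_le_of_perm b a ε hb ha σ⁻¹ (fun j => by
      have := h (σ⁻¹ j)
      rw [abs_le] at this
      have h2 : σ (σ⁻¹ j) = j := σ.apply_symm_apply j
      rw [h2] at this
      linarith [this.1]) i
    linarith
  · have := sorted_le_of_perm a b ε ha hb σ (fun j => by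
      have := (abs_le.mp (h j)).2; linarith) i
    linarith

lemma det_shift {n : ℕ} (U : Matrix (Fin n) (Fin n) ℝ) (hU : U * Uᵀ = 1) (a : Fin n → ℝ) (r : ℝ) :
    (r • (1 : Matrix (Fin n) (Fin n) ℝ) - U * Matrix.diagonal a * Uᵀ).det = ∏ i, (r - a i) := by
  have key : r • (1 : Matrix (Fin n) (Fin n) ℝ) - U * Matrix.diagonal a * Uᵀ
      = U * (Matrix.diagonal (fun i => r - a i)) * Uᵀ := by
    have h1 : Matrix.diagonal (fun i => r - a i)
        = r • (1 : Matrix (Fin n) (Fin n) ℝ) - Matrix.diagonal a := by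
      ext i j
      by_cases h : i = j <;>
        simp [Matrix.diagonal_apply, Matrix.one_apply, h, Matrix.sub_apply, Matrix.smul_apply,
          smul_eq_mul]
    rw [h1, Matrix.mul_sub, Matrix.sub_mul, Matrix.mul_smul, Matrix.smul_mul, mul_one, hU]
  have hU' : Uᵀ * U = 1 := mul_eq_one_comm.mp hU
  rw [key, Matrix.det_mul, Matrix.det_mul, mul_comm, ← mul_assoc, ← Matrix.det_mul, hU']
  simp [Matrix.det_diagonal]

open Polynomial in
lemma eigvec_unique {n : ℕ} (M : Matrix (Fin n) (Fin n) ℝ) (a b : Fin n → ℝ)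
    (ha : IsEigVec M a) (hb : IsEigVec M b) : a = b := by
  obtain ⟨hsa, U, hU, hMa⟩ := ha
  obtain ⟨hsb, V, hV, hMb⟩ := hb
  have hpoly : (∏ i, (X - C (a i))) = ∏ i, (X - C (b i)) := by
    apply Polynomial.funext
    intro r
    have h1 := det_shift U hU a r
    have h2 := det_shift V hV b r
    rw [← hMa] at h1; rw [← hMb] at h2
    simp only [eval_prod, eval_sub, eval_X, eval_C]
    rw [← h1, ← h2]
  have key : ∀ c : Fin n → ℝ, (∏ i, (X - C (c i))).roots = Multiset.map c Finset.univ.val := by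
    intro c
    have hc : (fun i : Fin n => X - C (c i)) = (fun r : ℝ => X - C r) ∘ c := rfl
    rw [Finset.prod_eq_multiset_prod, hc, ← Multiset.map_map,
      Polynomial.roots_multiset_prod_X_sub_C]
  have hmult : Multiset.map a Finset.univ.val = Multiset.map b Finset.univ.val := by
    rw [← key a, ← key b, hpoly]
  have hl : (↑(List.ofFn a) : Multiset ℝ) = ↑(List.ofFn b) := by
    rw [List.ofFn_eq_map, List.ofFn_eq_map, ← Multiset.map_coe, ← Multiset.map_coe]
    have : ((List.finRange n : List (Fin n)) : Multiset (Fin n)) = Finset.univ.val := by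
      rw [Fin.univ_def]
    rw [this]; exact hmult
  have hperm := Multiset.coe_eq_coe.mp hl
  haveI : Std.Antisymm (α := ℝ) (· ≥ ·) := ⟨fun x y h1 h2 => le_antisymm h2 h1⟩
  have hsorta : List.Pairwise (· ≥ ·) (List.ofFn a) := by
    rw [List.pairwise_ofFn]
    exact fun i j hij => hsa i j (le_of_lt hij)
  have hsortb : List.Pairwise (· ≥ ·) (List.ofFn b) := by
    rw [List.pairwise_ofFn]
    exact fun i j hij => hsb i j (le_of_lt hij)
  exact List.ofFn_injective (List.Perm.eq_of_pairwise' hsorta hsortb hperm)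

lemma isSymm_of_tendsto {n : ℕ} (u : ℕ → Matrix (Fin n) (Fin n) ℝ)
    (A : Matrix (Fin n) (Fin n) ℝ) (h : Filter.Tendsto u Filter.atTop (nhds A))
    (hs : ∀ k, (u k).IsSymm) : A.IsSymm := by
  have h2 : Filter.Tendsto (fun k => (u k)ᵀ) Filter.atTop (nhds Aᵀ) :=
    ((Continuous.matrix_transpose continuous_id).tendsto A).comp h
  have h3 : (fun k => (u k)ᵀ) = u := funext fun k => hs k
  rw [h3] at h2
  exact tendsto_nhds_unique h2 h

lemma exists_strictAnti_subseq (t : ℕ → ℝ) (ht : ∀ k, 0 < t k)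
    (htt : Filter.Tendsto t Filter.atTop (nhds 0)) :
    ∃ φ : ℕ → ℕ, StrictMono φ ∧ StrictAnti (t ∘ φ) := by
  have step : ∀ m : ℕ, ∃ m' : ℕ, m < m' ∧ t m' < t m := by
    intro m
    have hev : ∀ᶠ k in Filter.atTop, t k < t m :=
      htt.eventually (eventually_lt_nhds (ht m))
    obtain ⟨N, hN⟩ := Filter.eventually_atTop.mp hev
    exact ⟨max N (m + 1), lt_of_lt_of_le (Nat.lt_succ_self m) (le_max_right _ _),
      hN _ (le_max_left _ _)⟩
  choose f hf1 hf2 using step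
  refine ⟨fun k => Nat.rec 0 (fun _ p => f p) k, ?_, ?_⟩
  · exact strictMono_nat_of_lt_succ fun k => hf1 _
  · exact strictAnti_nat_of_succ_lt fun k => hf2 _

lemma tendsto_seq_nhdsWithin (t : ℕ → ℝ) (ht : ∀ k, 0 < t k)
    (htt : Filter.Tendsto t Filter.atTop (nhds 0)) :
    Filter.Tendsto t Filter.atTop (nhdsWithin 0 (Set.Ioi 0)) :=
  tendsto_nhdsWithin_of_tendsto_nhds_of_eventually_within t htt (Filter.Eventually.of_forall ht)

lemma isSymm_smul_sub {n : ℕ} (c : ℝ) {A B : Matrix (Fin n) (Fin n) ℝ}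
    (hA : A.IsSymm) (hB : B.IsSymm) : (c • (A - B)).IsSymm :=
  Matrix.IsSymm.smul (by rw [Matrix.IsSymm, Matrix.transpose_sub, hA, hB]) c

/-- chain rule for second-order tangent sets of spectral sets:
T²_C(X,H) = {W : λ″(X;H,W) ∈ T²_Θ(λ(X),λ′(X;H))}. -/
theorem second_tangent_spectral_chain_rule {n : ℕ}
    (Θ : Set (Fin n → ℝ))
    (hΘsym : ∀ (σ : Equiv.Perm (Fin n)) (x : Fin n → ℝ), x ∈ Θ → x ∘ σ ∈ Θ)
    (lam : Matrix (Fin n) (Fin n) ℝ → Fin n → ℝ)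
    (hlam : ∀ X : Matrix (Fin n) (Fin n) ℝ, X.IsSymm → IsEigVec X (lam X))
    (C : Set (Matrix (Fin n) (Fin n) ℝ))
    (hC : C = {X | X.IsSymm ∧ lam X ∈ Θ})
    (X : Matrix (Fin n) (Fin n) ℝ) (hXC : X ∈ C)
    (H : Matrix (Fin n) (Fin n) ℝ) (hHt : H ∈ tcone C X)
    (d : Fin n → ℝ)
    (hd : ∀ i, Filter.Tendsto (fun t : ℝ => (lam (X + t • H) i - lam X i) / t)
      (nhdsWithin 0 (Set.Ioi 0)) (nhds (d i)))
    (lam2 : Matrix (Fin n) (Fin n) ℝ → Fin n → ℝ)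
    (hexp : ∀ W : Matrix (Fin n) (Fin n) ℝ, W.IsSymm →
      ∀ γ : ℝ → Matrix (Fin n) (Fin n) ℝ, (∀ t, (γ t).IsSymm) →
      Filter.Tendsto (fun t : ℝ => (t ^ 2)⁻¹ • γ t) (nhdsWithin 0 (Set.Ioi 0)) (nhds 0) →
      ∀ i, Filter.Tendsto
        (fun t : ℝ =>
          (lam (X + t • H + (t ^ 2 / 2) • W + γ t) i - lam X i - t * d i) / (t ^ 2 / 2))
        (nhdsWithin 0 (Set.Ioi 0)) (nhds (lam2 W i))) :
    tcone2 C X H = {W | W.IsSymm ∧ lam2 W ∈ tcone2 Θ (lam X) d} := by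
  classical
  have memC : ∀ M : Matrix (Fin n) (Fin n) ℝ, M ∈ C ↔ M.IsSymm ∧ lam M ∈ Θ := by
    intro M; rw [hC]; exact Iff.rfl
  have hXs : X.IsSymm := ((memC X).mp hXC).1
  have hHs : H.IsSymm := by
    obtain ⟨t, v, ht, htt, hv, hmem⟩ := hHt
    refine isSymm_of_tendsto v H hv (fun k => ?_)
    have hm : (X + t k • v k).IsSymm := ((memC _).mp (hmem k)).1
    have he : v k = (t k)⁻¹ • ((X + t k • v k) - X) := by
      rw [add_sub_cancel_left, inv_smul_smul₀ (ne_of_gt (ht k))]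
    rw [he]
    exact isSymm_smul_sub _ hm hXs
  ext W
  simp only [Set.mem_setOf_eq]
  constructor
  · rintro ⟨t, v, ht, htt, hv, hmem⟩
    obtain ⟨φ, hφm, hφa⟩ := exists_strictAnti_subseq t ht htt
    set s : ℕ → ℝ := t ∘ φ with hsdef
    set u : ℕ → Matrix (Fin n) (Fin n) ℝ := v ∘ φ with hudef
    have hs : ∀ k, 0 < s k := fun k => ht (φ k)
    have hst : Filter.Tendsto s Filter.atTop (nhds 0) := htt.comp hφm.tendsto_atTop
    have hu : Filter.Tendsto u Filter.atTop (nhds W) := hv.comp hφm.tendsto_atTop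
    have hmem' : ∀ k, X + s k • H + (s k ^ 2 / 2) • u k ∈ C := fun k => hmem (φ k)
    have husym : ∀ k, (u k).IsSymm := by
      intro k
      have hm : (X + s k • H + (s k ^ 2 / 2) • u k).IsSymm := ((memC _).mp (hmem' k)).1
      have hs2 : (s k ^ 2 / 2) ≠ 0 := by have := hs k; positivity
      have he : u k
          = (s k ^ 2 / 2)⁻¹ • ((X + s k • H + (s k ^ 2 / 2) • u k) - (X + s k • H)) := by
        rw [add_sub_cancel_left, inv_smul_smul₀ hs2]
      rw [he]
      exact isSymm_smul_sub _ hm (hXs.add (Matrix.IsSymm.smul hHs (s k)))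
    have hWs : W.IsSymm := isSymm_of_tendsto u W hu husym
    set γ : ℝ → Matrix (Fin n) (Fin n) ℝ := fun r =>
      if h : ∃ k, s k = r then (r ^ 2 / 2) • (u (h.choose) - W) else 0 with hγdef
    have hγs : ∀ k, γ (s k) = (s k ^ 2 / 2) • (u k - W) := by
      intro k
      have h : ∃ m, s m = s k := ⟨k, rfl⟩
      simp only [hγdef]
      rw [dif_pos h, hφa.injective h.choose_spec]
    have hγsym : ∀ r, (γ r).IsSymm := by
      intro r
      simp only [hγdef]
      split
      · exact Matrix.IsSymm.smul
          (by rw [Matrix.IsSymm, Matrix.transpose_sub, husym _, hWs]) _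
      · exact Matrix.isSymm_zero
    have hγ0 : Filter.Tendsto (fun r : ℝ => (r ^ 2)⁻¹ • γ r)
        (nhdsWithin 0 (Set.Ioi 0)) (nhds 0) := by
      rw [Filter.tendsto_def]
      intro Uset hUset
      have h2 : Filter.Tendsto (fun k => (2 : ℝ)⁻¹ • (u k - W)) Filter.atTop (nhds 0) := by
        have := (hu.sub (tendsto_const_nhds (x := W))).const_smul ((2:ℝ)⁻¹)
        simpa using this
      obtain ⟨N, hN⟩ := Filter.eventually_atTop.mp (h2.eventually_mem hUset)
      apply Filter.mem_of_superset (Ioo_mem_nhdsGT_of_mem (Set.left_mem_Ico.mpr (hs N)))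
      intro r hr
      simp only [Set.mem_preimage, hγdef]
      by_cases h : ∃ k, s k = r
      · rw [dif_pos h]
        have hj : N < h.choose := by
          apply hφa.lt_iff_gt.mp
          rw [h.choose_spec]
          exact hr.2
        have hr0 : r ≠ 0 := ne_of_gt hr.1
        rw [smul_smul]
        have hsc : (r ^ 2)⁻¹ * (r ^ 2 / 2) = (2:ℝ)⁻¹ := by field_simp
        rw [hsc]
        exact hN _ (le_of_lt hj)
      · rw [dif_neg h, smul_zero]
        exact mem_of_mem_nhds hUset
    have harg : ∀ k, X + s k • H + (s k ^ 2 / 2) • W + γ (s k)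
        = X + s k • H + (s k ^ 2 / 2) • u k := by
      intro k
      rw [hγs k, smul_sub]
      abel
    set z : ℕ → Fin n → ℝ := fun k i =>
      (lam (X + s k • H + (s k ^ 2 / 2) • u k) i - lam X i - s k * d i) / (s k ^ 2 / 2)
      with hzdef
    refine ⟨hWs, s, z, hs, hst, ?_, ?_⟩
    · rw [tendsto_pi_nhds]
      intro i
      have hgoal : (fun k => z k i) = fun k =>
          (lam (X + s k • H + (s k ^ 2 / 2) • W + γ (s k)) i - lam X i - s k * d i)
            / (s k ^ 2 / 2) := by
        funext k
        rw [harg k]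
      rw [hgoal]
      exact (hexp W hWs γ hγsym hγ0 i).comp (tendsto_seq_nhdsWithin s hs hst)
    · intro k
      have hs2 : (s k ^ 2 / 2) ≠ 0 := by have := hs k; positivity
      have hform : lam X + s k • d + (s k ^ 2 / 2) • z k
          = lam (X + s k • H + (s k ^ 2 / 2) • u k) := by
        funext i
        simp only [hzdef, Pi.add_apply, Pi.smul_apply, smul_eq_mul]
        have hcan : s k ^ 2 / 2 *
            ((lam (X + s k • H + (s k ^ 2 / 2) • u k) i - lam X i - s k * d i) / (s k ^ 2 / 2))
            = lam (X + s k • H + (s k ^ 2 / 2) • u k) i - lam X i - s k * d i := by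
          rw [mul_comm]
          exact div_mul_cancel₀ _ hs2
        rw [hcan]
        ring
      rw [hform]
      exact ((memC _).mp (hmem' k)).2
  · rintro ⟨hWs, s, z, hs, hst, hz, hmemΘ⟩
    have hs2 : ∀ k, (s k ^ 2 / 2) ≠ 0 := fun k => by have := hs k; positivity
    have hs2' : ∀ k, (0:ℝ) < s k ^ 2 / 2 := fun k => by have := hs k; positivity
    set A : ℕ → Matrix (Fin n) (Fin n) ℝ := fun k => X + s k • H + (s k ^ 2 / 2) • W
      with hAdef
    have hAs : ∀ k, (A k).IsSymm := fun k =>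
      (hXs.add (Matrix.IsSymm.smul hHs (s k))).add (Matrix.IsSymm.smul hWs _)
    have hEig : ∀ k, IsEigVec (A k) (lam (A k)) := fun k => hlam _ (hAs k)
    choose U hU1 hU2 using fun k => (hEig k).2
    set y : ℕ → Fin n → ℝ := fun k => lam X + s k • d + (s k ^ 2 / 2) • z k with hydef
    have hyΘ : ∀ k, y k ∈ Θ := fun k => hmemΘ k
    choose σ hσ using fun k => exists_sort_perm (y k)
    set b : ℕ → Fin n → ℝ := fun k => y k ∘ σ k with hbdef
    have hbΘ : ∀ k, b k ∈ Θ := fun k => hΘsym (σ k) (y k) (hyΘ k)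
    set M : ℕ → Matrix (Fin n) (Fin n) ℝ := fun k => U k * Matrix.diagonal (b k) * (U k)ᵀ
      with hMdef
    have hMs : ∀ k, (M k).IsSymm := by
      intro k
      show (M k)ᵀ = M k
      simp only [hMdef]
      rw [Matrix.transpose_mul, Matrix.transpose_mul, Matrix.transpose_transpose,
        Matrix.diagonal_transpose, Matrix.mul_assoc]
    have hlamM : ∀ k, lam (M k) = b k := fun k =>
      eigvec_unique (M k) (lam (M k)) (b k) (hlam _ (hMs k)) ⟨hσ k, U k, hU1 k, rfl⟩
    have hMC : ∀ k, M k ∈ C := fun k => (memC _).mpr ⟨hMs k, by rw [hlamM k]; exact hbΘ k⟩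
    set w : ℕ → Fin n → ℝ := fun k i => (lam (A k) i - lam X i - s k * d i) / (s k ^ 2 / 2)
      with hwdef
    have hw : ∀ i, Filter.Tendsto (fun k => w k i) Filter.atTop (nhds (lam2 W i)) := by
      intro i
      have h0 : Filter.Tendsto
          (fun t : ℝ => (t ^ 2)⁻¹ • ((fun _ : ℝ => (0 : Matrix (Fin n) (Fin n) ℝ)) t))
          (nhdsWithin 0 (Set.Ioi 0)) (nhds 0) := by
        simpa using (tendsto_const_nhds (x := (0 : Matrix (Fin n) (Fin n) ℝ)))
      have hcomp := (hexp W hWs (fun _ => 0) (fun _ => Matrix.isSymm_zero) h0 i).comp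
        (tendsto_seq_nhdsWithin s hs hst)
      simp only [Function.comp, add_zero] at hcomp
      exact hcomp
    set δ : ℕ → ℝ := fun k => ∑ j, |z k j - w k j| with hδdef
    have hδ0 : Filter.Tendsto δ Filter.atTop (nhds 0) := by
      have hsum : Filter.Tendsto δ Filter.atTop (nhds (∑ _j : Fin n, (0:ℝ))) := by
        apply tendsto_finset_sum
        intro j _
        have hzj := (tendsto_pi_nhds.mp hz) j
        have := (hzj.sub (hw j)).abs
        simpa using this
      simpa using hsum
    have hδnn : ∀ k, 0 ≤ δ k := fun k => Finset.sum_nonneg (fun j _ => abs_nonneg _)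
    have hyA : ∀ k m, y k m - lam (A k) m = (s k ^ 2 / 2) * (z k m - w k m) := by
      intro k m
      simp only [hydef, hwdef, Pi.add_apply, Pi.smul_apply, smul_eq_mul]
      have hcan : s k ^ 2 / 2 * ((lam (A k) m - lam X m - s k * d m) / (s k ^ 2 / 2))
          = lam (A k) m - lam X m - s k * d m := by
        rw [mul_comm]
        exact div_mul_cancel₀ _ (hs2 k)
      rw [mul_sub, hcan]
      ring
    have hzw : ∀ k m, |z k m - w k m| ≤ δ k := fun k m =>
      Finset.single_le_sum (f := fun j => |z k j - w k j|)
        (fun j _ => abs_nonneg _) (Finset.mem_univ m)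
    have hbound : ∀ k i, |b k i - lam (A k) i| ≤ (s k ^ 2 / 2) * δ k := by
      intro k i
      apply sorted_abs_of_perm (b k) (lam (A k)) _ (hσ k) (hEig k).1 (σ k) _ i
      intro j
      have h1 : b k j - lam (A k) (σ k j) = (s k ^ 2 / 2) * (z k (σ k j) - w k (σ k j)) := by
        have := hyA k (σ k j)
        simpa only [hbdef, Function.comp_apply] using this
      rw [h1, abs_mul, abs_of_pos (hs2' k)]
      exact mul_le_mul_of_nonneg_left (hzw k (σ k j)) (le_of_lt (hs2' k))
    have hUbd : ∀ k p m, |U k p m| ≤ 1 := by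
      intro k p m
      have hdiag : ∑ j, U k p j * U k p j = 1 := by
        have := congrArg (fun B => B p p) (hU1 k)
        simpa [Matrix.mul_apply, Matrix.transpose_apply, Matrix.one_apply_eq] using this
      have hle : U k p m ^ 2 ≤ 1 := by
        rw [← hdiag, pow_two]
        exact Finset.single_le_sum (f := fun j => U k p j * U k p j)
          (fun j _ => mul_self_nonneg _) (Finset.mem_univ m)
      exact (sq_le_one_iff_abs_le_one _).mp hle
    set e : ℕ → Fin n → ℝ := fun k => (s k ^ 2 / 2)⁻¹ • (b k - lam (A k)) with hedef
    have hebd : ∀ k i, |e k i| ≤ δ k := by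
      intro k i
      simp only [hedef, Pi.smul_apply, Pi.sub_apply, smul_eq_mul]
      rw [abs_mul, abs_of_pos (inv_pos.mpr (hs2' k))]
      calc (s k ^ 2 / 2)⁻¹ * |b k i - lam (A k) i|
          ≤ (s k ^ 2 / 2)⁻¹ * ((s k ^ 2 / 2) * δ k) :=
            mul_le_mul_of_nonneg_left (hbound k i) (le_of_lt (inv_pos.mpr (hs2' k)))
        _ = δ k := by rw [← mul_assoc, inv_mul_cancel₀ (hs2 k), one_mul]
    have hME : ∀ k, (s k ^ 2 / 2)⁻¹ • (M k - A k)
        = U k * Matrix.diagonal (e k) * (U k)ᵀ := by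
      intro k
      have hsub : M k - A k
          = U k * Matrix.diagonal (fun i => b k i - lam (A k) i) * (U k)ᵀ := by
        conv_lhs => rw [hMdef, hU2 k, ← Matrix.sub_mul, ← Matrix.mul_sub,
          Matrix.diagonal_sub]
      rw [hsub]
      have he2 : e k = ((s k ^ 2 / 2)⁻¹ • fun i => b k i - lam (A k) i) := rfl
      rw [he2, Matrix.diagonal_smul, Matrix.mul_smul, Matrix.smul_mul]
    have hEtend : Filter.Tendsto (fun k => (s k ^ 2 / 2)⁻¹ • (M k - A k))
        Filter.atTop (nhds 0) := by
      apply tendsto_pi_nhds.mpr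
      intro p
      rw [tendsto_pi_nhds]
      intro q
      have hentry : ∀ k, ((s k ^ 2 / 2)⁻¹ • (M k - A k)) p q
          = ∑ m, U k p m * e k m * U k q m := by
        intro k
        rw [hME k, Matrix.mul_apply]
        simp only [Matrix.mul_diagonal, Matrix.transpose_apply]
      have hz0 : ((0 : Matrix (Fin n) (Fin n) ℝ) p q) = 0 := rfl
      rw [hz0]
      apply squeeze_zero_norm (a := fun k => (n : ℝ) * δ k)
      · intro k
        rw [hentry k, Real.norm_eq_abs]
        calc |∑ m, U k p m * e k m * U k q m|
            ≤ ∑ m, |U k p m * e k m * U k q m| := Finset.abs_sum_le_sum_abs _ _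
          _ ≤ ∑ _m : Fin n, δ k := by
              apply Finset.sum_le_sum
              intro m _
              rw [abs_mul, abs_mul]
              calc |U k p m| * |e k m| * |U k q m| ≤ 1 * |e k m| * 1 :=
                    mul_le_mul
                      (mul_le_mul (hUbd k p m) le_rfl (abs_nonneg _) zero_le_one)
                      (hUbd k q m) (abs_nonneg _) (by positivity)
                _ = |e k m| := by ring
                _ ≤ δ k := hebd k m
          _ = (n : ℝ) * δ k := by
              simp [Finset.sum_const, Finset.card_univ, nsmul_eq_mul]
      · simpa using hδ0.const_mul ((n : ℝ))
    refine ⟨s, fun k => W + (s k ^ 2 / 2)⁻¹ • (M k - A k), hs, hst, ?_, ?_⟩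
    · have := (tendsto_const_nhds (x := W)).add hEtend
      simpa using this
    · intro k
      have heq : X + s k • H + (s k ^ 2 / 2) • (W + (s k ^ 2 / 2)⁻¹ • (M k - A k)) = M k := by
        rw [smul_add, smul_inv_smul₀ (hs2 k), ← add_assoc]
        simp only [hAdef]
        abel
      rw [heq]
      exact hMC k
end
end

section
/- Let X ∈ Sⁿ₋ (negative semidefinite) with largest eigenvalue μ₁ = 0, and let U be an orthogonal matrix diagonalizing X with ordered eigenvalues, α₁ the index set of eigenvalues equal to 0. Then the tangent cone to Sⁿ₋ at X is T_{Sⁿ₋}(X) = {H ∈ Sⁿ : λ₁(U_{α₁}ᵀ H U_{α₁}) ≤ 0}, i.e. H is tangent iff the compression of H to the null space of X is negative semidefinite. -/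
open Filter Topology Set Matrix

noncomputable section

/-- The cone of real symmetric negative semidefinite n×n matrices. -/
def Sneg (n : ℕ) : Set (Matrix (Fin n) (Fin n) ℝ) :=
  {M | M.IsSymm ∧ ∀ v : Fin n → ℝ, v ⬝ᵥ M.mulVec v ≤ 0}

section TangentAux
variable {n : ℕ}

lemma dot_mulVec_eq_sum (w z : Fin n → ℝ) (M : Matrix (Fin n) (Fin n) ℝ) :
    w ⬝ᵥ M.mulVec z = ∑ i, ∑ j, w i * M i j * z j := by
  simp [dotProduct, Matrix.mulVec, Finset.mul_sum, mul_assoc]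

lemma conj_quad (U M : Matrix (Fin n) (Fin n) ℝ) (z : Fin n → ℝ) :
    (U.mulVec z) ⬝ᵥ M.mulVec (U.mulVec z) = z ⬝ᵥ (Uᵀ * M * U).mulVec z := by
  rw [← Matrix.mulVec_mulVec, ← Matrix.mulVec_mulVec]
  conv_rhs => rw [Matrix.dotProduct_mulVec, Matrix.vecMul_transpose]

lemma qdiag (a z : Fin n → ℝ) :
    z ⬝ᵥ (Matrix.diagonal a).mulVec z = ∑ i, a i * z i ^ 2 := by
  simp only [dotProduct, Matrix.mulVec_diagonal]
  exact Finset.sum_congr rfl fun i _ => by ring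

lemma sum_eq_subtype_sum (p : Fin n → Prop) [DecidablePred p] (g : Fin n → ℝ)
    (hg : ∀ i, ¬ p i → g i = 0) : ∑ i, g i = ∑ i : {i // p i}, g i.1 := by
  rw [← Finset.sum_subtype (Finset.univ.filter p) (by simp) g]
  exact (Finset.sum_subset (Finset.filter_subset _ _)
    (fun i _ hi => hg i (by simpa using hi))).symm

lemma subtype_double_sum (p : Fin n → Prop) [DecidablePred p]
    (M : Matrix (Fin n) (Fin n) ℝ) (x : Fin n → ℝ) (hx : ∀ i, ¬ p i → x i = 0) :
    ∑ i, ∑ j, x i * M i j * x j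
      = ∑ i : {i // p i}, ∑ j : {j // p j}, x i.1 * M i.1 j.1 * x j.1 := by
  rw [sum_eq_subtype_sum p _ (fun i hi => by simp [hx i hi])]
  exact Finset.sum_congr rfl fun i _ =>
    sum_eq_subtype_sum p _ (fun j hj => by simp [hx j hj])

lemma row_bound (B : Matrix (Fin n) (Fin n) ℝ) (p : Fin n → ℝ) (hp : ∀ i, 0 ≤ p i) :
    ∑ i, (∑ j, |B i j|) * p i ≤ (∑ i, ∑ j, |B i j|) * ∑ i, p i := by
  rw [Finset.mul_sum]
  refine Finset.sum_le_sum fun i _ => ?_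
  refine mul_le_mul_of_nonneg_right ?_ (hp i)
  exact Finset.single_le_sum (f := fun i => ∑ j, |B i j|)
    (fun i _ => Finset.sum_nonneg fun j _ => abs_nonneg _) (Finset.mem_univ i)

lemma col_bound (B : Matrix (Fin n) (Fin n) ℝ) (q : Fin n → ℝ) (hq : ∀ j, 0 ≤ q j) :
    ∑ i, ∑ j, |B i j| * q j ≤ (∑ i, ∑ j, |B i j|) * ∑ j, q j := by
  rw [Finset.sum_comm]
  calc ∑ j, ∑ i, |B i j| * q j = ∑ j, (∑ i, |B i j|) * q j := by
        simp [Finset.sum_mul]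
    _ ≤ (∑ j, ∑ i, |B i j|) * ∑ j, q j := by
        rw [Finset.mul_sum]
        refine Finset.sum_le_sum fun j _ => ?_
        refine mul_le_mul_of_nonneg_right ?_ (hq j)
        exact Finset.single_le_sum (f := fun j => ∑ i, |B i j|)
          (fun j _ => Finset.sum_nonneg fun i _ => abs_nonneg _) (Finset.mem_univ j)
    _ = (∑ i, ∑ j, |B i j|) * ∑ j, q j := by rw [Finset.sum_comm]

lemma bil_bound (B : Matrix (Fin n) (Fin n) ℝ) (p q : Fin n → ℝ) (s : ℝ) :
    2 * s * (∑ i, ∑ j, p i * B i j * q j)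
      ≤ s ^ 2 * ((∑ i, ∑ j, |B i j|) * ∑ i, p i ^ 2)
        + (∑ i, ∑ j, |B i j|) * ∑ j, q j ^ 2 := by
  have step1 : 2 * s * (∑ i, ∑ j, p i * B i j * q j)
      ≤ ∑ i, ∑ j, (s ^ 2 * (|B i j| * p i ^ 2) + |B i j| * q j ^ 2) := by
    rw [Finset.mul_sum]
    refine Finset.sum_le_sum fun i _ => ?_
    rw [Finset.mul_sum]
    refine Finset.sum_le_sum fun j _ => ?_
    nlinarith [mul_nonneg (sub_nonneg.mpr (le_abs_self (B i j))) (sq_nonneg (s * p i + q j)),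
      mul_nonneg (by linarith [neg_abs_le (B i j)] : (0:ℝ) ≤ |B i j| + B i j)
        (sq_nonneg (s * p i - q j))]
  refine step1.trans ?_
  have e : ∑ i, ∑ j, (s ^ 2 * (|B i j| * p i ^ 2) + |B i j| * q j ^ 2)
      = s ^ 2 * (∑ i, (∑ j, |B i j|) * p i ^ 2) + ∑ i, ∑ j, |B i j| * q j ^ 2 := by
    simp [Finset.sum_add_distrib, Finset.mul_sum, Finset.sum_mul, mul_comm, mul_left_comm]
  rw [e]
  have h1 := row_bound B (fun i => p i ^ 2) (fun i => sq_nonneg _)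
  have h2 := col_bound B (fun j => q j ^ 2) (fun j => sq_nonneg _)
  nlinarith [sq_nonneg s]

lemma bil_bound2 (B : Matrix (Fin n) (Fin n) ℝ) (p q : Fin n → ℝ) (s : ℝ) :
    2 * s * (∑ i, ∑ j, p i * B i j * q j)
      ≤ (∑ i, ∑ j, |B i j|) * ∑ i, p i ^ 2
        + s ^ 2 * ((∑ i, ∑ j, |B i j|) * ∑ j, q j ^ 2) := by
  have h := bil_bound Bᵀ q p s
  have e1 : ∑ i, ∑ j, q i * Bᵀ i j * p j = ∑ i, ∑ j, p i * B i j * q j := by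
    rw [Finset.sum_comm]
    exact Finset.sum_congr rfl fun i _ => Finset.sum_congr rfl fun j _ => by
      rw [Matrix.transpose_apply]; ring
  have e2 : ∑ i, ∑ j, |Bᵀ i j| = ∑ i, ∑ j, |B i j| := by
    rw [Finset.sum_comm]
    exact Finset.sum_congr rfl fun i _ => Finset.sum_congr rfl fun j _ => by
      rw [Matrix.transpose_apply]
  rw [e1, e2] at h
  linarith

set_option maxHeartbeats 2000000 in
lemma key_scalar (B : Matrix (Fin n) (Fin n) ℝ) (a : Fin n → ℝ) (d t ε : ℝ)
    (hd : 0 < d) (ha : ∀ i, a i ≠ 0 → a i ≤ -d)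
    (hQ : ∀ x : Fin n → ℝ, (∀ i, a i ≠ 0 → x i = 0) → ∑ i, ∑ j, x i * B i j * x j ≤ 0)
    (ht : 0 < t) (hε : 0 < ε)
    (hkey : t * ((∑ i, ∑ j, |B i j|) + 1) ^ 2 / ε + t * ((∑ i, ∑ j, |B i j|) + 1) ≤ d)
    (z : Fin n → ℝ) :
    ∑ i, a i * z i ^ 2 + t * (∑ i, ∑ j, z i * B i j * z j) - t * ε * ∑ i, z i ^ 2 ≤ 0 := by
  classical
  set c : ℝ := ∑ i, ∑ j, |B i j| with hc
  have hc0 : 0 ≤ c := Finset.sum_nonneg fun i _ => Finset.sum_nonneg fun j _ => abs_nonneg _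
  set x : Fin n → ℝ := fun i => if a i = 0 then z i else 0 with hx
  set y : Fin n → ℝ := fun i => if a i = 0 then 0 else z i with hy
  set s : ℝ := ε / (c + 1) with hs
  have hs0 : 0 < s := div_pos hε (by linarith)
  set Sx : ℝ := ∑ i, x i ^ 2 with hSx
  set Sy : ℝ := ∑ i, y i ^ 2 with hSy
  have hSx0 : 0 ≤ Sx := Finset.sum_nonneg fun i _ => sq_nonneg _
  have hSy0 : 0 ≤ Sy := Finset.sum_nonneg fun i _ => sq_nonneg _
  have hsplit : ∑ i, z i ^ 2 = Sx + Sy := by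
    rw [hSx, hSy, ← Finset.sum_add_distrib]
    refine Finset.sum_congr rfl fun i _ => ?_
    by_cases h : a i = 0 <;> simp [hx, hy, h]
  have hA1 : ∑ i, a i * z i ^ 2 ≤ -d * Sy := by
    rw [hSy, Finset.mul_sum]
    refine Finset.sum_le_sum fun i _ => ?_
    by_cases h : a i = 0
    · simp [hy, h]
    · simp only [hy, if_neg h]
      exact mul_le_mul_of_nonneg_right (ha i h) (sq_nonneg _)
  have hA2 : ∑ i, ∑ j, z i * B i j * z j
      = (∑ i, ∑ j, x i * B i j * x j) + (∑ i, ∑ j, x i * B i j * y j)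
        + (∑ i, ∑ j, y i * B i j * x j) + (∑ i, ∑ j, y i * B i j * y j) := by
    have hz : ∀ i, z i = x i + y i := by
      intro i; by_cases h : a i = 0 <;> simp [hx, hy, h]
    calc ∑ i, ∑ j, z i * B i j * z j
        = ∑ i, ∑ j, (x i * B i j * x j + x i * B i j * y j
            + y i * B i j * x j + y i * B i j * y j) := by
          refine Finset.sum_congr rfl fun i _ => Finset.sum_congr rfl fun j _ => ?_
          rw [hz i, hz j]; ring
      _ = _ := by simp [Finset.sum_add_distrib]
  have hA3 : ∑ i, ∑ j, x i * B i j * x j ≤ 0 := by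
    refine hQ x fun i hi => ?_
    simp [hx, hi]
  have hB1 := bil_bound B x y s
  have hB2 := bil_bound2 B y x s
  have hB3 := bil_bound B y y 1
  rw [← hc] at hB1 hB2 hB3
  rw [← hSx] at hB1 hB2
  rw [← hSy] at hB1 hB2 hB3

  have hsc : s * (c + 1) = ε := div_mul_cancel₀ ε (by linarith)
  have hscε : s * c ≤ ε := by nlinarith
  -- multiply hkey by s and simplify
  have hdivs : s * (t * (c + 1) ^ 2 / ε) = t * (c + 1) := by
    rw [hs]; field_simp
  have hkey' : t * (c + 1) + s * (t * (c + 1)) ≤ s * d := by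
    have h := mul_le_mul_of_nonneg_left hkey hs0.le
    rw [mul_add, hdivs] at h
    linarith
  -- assemble
  set Qxx : ℝ := ∑ i, ∑ j, x i * B i j * x j
  set Qxy : ℝ := ∑ i, ∑ j, x i * B i j * y j
  set Qyx : ℝ := ∑ i, ∑ j, y i * B i j * x j
  set Qyy : ℝ := ∑ i, ∑ j, y i * B i j * y j
  have k1 : t * (2 * s * Qxy) ≤ t * (s ^ 2 * (c * Sx) + c * Sy) :=
    mul_le_mul_of_nonneg_left hB1 ht.le
  have k2 : t * (2 * s * Qyx) ≤ t * (c * Sy + s ^ 2 * (c * Sx)) :=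
    mul_le_mul_of_nonneg_left hB2 ht.le
  have hst : (0:ℝ) ≤ 2 * s * t := by nlinarith
  have k3 : (2 * s * t) * Qyy ≤ (2 * s * t) * (c * Sy) := by
    have : Qyy ≤ c * Sy := by linarith
    exact mul_le_mul_of_nonneg_left this hst
  have k4 : (2 * s) * (∑ i, a i * z i ^ 2) ≤ (2 * s) * (-d * Sy) :=
    mul_le_mul_of_nonneg_left hA1 (by nlinarith)
  have k5 : (2 * s * t) * Qxx ≤ 0 :=
    mul_nonpos_of_nonneg_of_nonpos hst hA3
  have k6 : Sx * (2 * t * (s * (s * c))) ≤ Sx * (2 * t * (s * ε)) := by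
    refine mul_le_mul_of_nonneg_left ?_ hSx0
    have := mul_le_mul_of_nonneg_left hscε (by nlinarith : (0:ℝ) ≤ 2 * t * s)
    linarith [this]
  have k7 : Sy * (2 * (t * c) + 2 * (s * (t * c))) ≤ Sy * (2 * (s * d)) := by
    refine mul_le_mul_of_nonneg_left ?_ hSy0
    nlinarith [hs0, ht]
  have k8 : 0 ≤ Sy * (2 * s * t * ε) := mul_nonneg hSy0 (by nlinarith)
  have k9 : 0 ≤ Sx * (2 * s * t * ε) := mul_nonneg hSx0 (by nlinarith)
  have main2 : 2 * s * (∑ i, a i * z i ^ 2 + t * (∑ i, ∑ j, z i * B i j * z j)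
      - t * ε * ∑ i, z i ^ 2) ≤ 0 := by
    rw [hA2, hsplit]
    nlinarith [k1, k2, k3, k4, k5, k6, k7, k8, k9]
  nlinarith [main2, hs0]
lemma key_param (d K e : ℝ) (hd : 0 < d) (hK : 1 ≤ K) (he0 : 0 < e) (he1 : e ≤ 1) :
    (d * e ^ 2 / (K ^ 2 + K)) * K ^ 2 / e + (d * e ^ 2 / (K ^ 2 + K)) * K ≤ d := by
  have hKpos : 0 < K ^ 2 + K := by nlinarith
  have h1 : (d * e ^ 2 / (K ^ 2 + K)) * K ^ 2 / e = d * e * K ^ 2 / (K ^ 2 + K) := by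
    field_simp
  have h2 : (d * e ^ 2 / (K ^ 2 + K)) * K = d * e ^ 2 * K / (K ^ 2 + K) := by ring
  rw [h1, h2, ← add_div, div_le_iff₀ hKpos]
  have h3 : d * e * K ^ 2 ≤ d * K ^ 2 := by
    nlinarith [mul_nonneg (sub_nonneg.mpr he1) (mul_nonneg hd.le (sq_nonneg K))]
  have h4 : d * e ^ 2 * K ≤ d * K := by
    nlinarith [mul_nonneg (by nlinarith : (0:ℝ) ≤ 1 - e ^ 2)
      (mul_nonneg hd.le (by linarith : (0:ℝ) ≤ K))]
  linarith
end TangentAux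

/-- tangent cone to Sⁿ₋ at X with μ₁ = 0: H is tangent iff H is symmetric
and the compression of H to the null space of X (the block U_{α₁}ᵀ H U_{α₁}) is negative
semidefinite. -/
theorem tangent_cone_Sneg {n : ℕ} (hn : 0 < n)
    (X U : Matrix (Fin n) (Fin n) ℝ) (a : Fin n → ℝ)
    (hord : ∀ i j : Fin n, i ≤ j → a j ≤ a i)
    (hU : U * Uᵀ = 1) (hXU : X = U * Matrix.diagonal a * Uᵀ)
    (hXneg : X ∈ Sneg n)
    (hmax : a ⟨0, hn⟩ = 0) :
    tcone (Sneg n) X =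
      {H | H.IsSymm ∧ ∀ v : {i : Fin n // a i = 0} → ℝ,
        ∑ i, ∑ j, v i * (Uᵀ * H * U) i.1 j.1 * v j ≤ 0} := by
  classical
  have hU' : Uᵀ * U = 1 := mul_eq_one_comm.mp hU
  have hUXU : Uᵀ * X * U = Matrix.diagonal a := by
    rw [hXU]
    have e : Uᵀ * (U * Matrix.diagonal a * Uᵀ) * U
        = (Uᵀ * U) * Matrix.diagonal a * (Uᵀ * U) := by
      simp only [Matrix.mul_assoc]
    rw [e, hU', Matrix.one_mul, Matrix.mul_one]
  have hqX : ∀ z : Fin n → ℝ,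
      (U.mulVec z) ⬝ᵥ X.mulVec (U.mulVec z) = ∑ i, a i * z i ^ 2 := fun z => by
    rw [conj_quad, hUXU, qdiag]
  have ha_le : ∀ i, a i ≤ 0 := by
    intro i
    have h := hXneg.2 (U.mulVec (Pi.single i 1))
    rw [hqX] at h
    simpa [Pi.single_apply, sq] using h
  ext H
  constructor
  · rintro ⟨t, v, htpos, ht0, hv, hmem⟩
    have hventry : ∀ i j, Tendsto (fun k => v k i j) atTop (𝓝 (H i j)) := by
      intro i j
      exact tendsto_pi_nhds.mp (tendsto_pi_nhds.mp hv i) j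
    have hvsym : ∀ k i j, v k i j = v k j i := by
      intro k i j
      have h1 : (X + t k • v k)ᵀ = X + t k • v k := (hmem k).1
      have h2 : Xᵀ = X := hXneg.1
      rw [Matrix.transpose_add, Matrix.transpose_smul, h2] at h1
      have h3 : (t k • (v k)ᵀ) i j = (t k • v k) i j := by
        have := add_left_cancel h1
        rw [this]
      have h4 : t k * v k j i = t k * v k i j := h3
      have := mul_left_cancel₀ (ne_of_gt (htpos k)) h4
      linarith [this]
    constructor
    · show Hᵀ = H
      ext i j
      have h1 : Tendsto (fun k => v k i j) atTop (𝓝 (H j i)) := by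
        refine Tendsto.congr (fun k => (hvsym k j i)) ?_
        exact tendsto_pi_nhds.mp (tendsto_pi_nhds.mp hv j) i
      exact tendsto_nhds_unique h1 (hventry i j)
    · intro w
      set wt : Fin n → ℝ := fun i => if h : a i = 0 then w ⟨i, h⟩ else 0 with hwt
      set u : Fin n → ℝ := U.mulVec wt with hu
      have hXu : u ⬝ᵥ X.mulVec u = 0 := by
        rw [hu, hqX]
        refine Finset.sum_eq_zero fun i _ => ?_
        by_cases h : a i = 0 <;> simp [hwt, h]
      have hvk : ∀ k, u ⬝ᵥ (v k).mulVec u ≤ 0 := by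
        intro k
        have h := (hmem k).2 u
        rw [Matrix.add_mulVec, Matrix.smul_mulVec, dotProduct_add,
          dotProduct_smul, hXu] at h
        have h2 : t k • (u ⬝ᵥ (v k).mulVec u) ≤ 0 := by linarith
        rw [smul_eq_mul] at h2
        nlinarith [htpos k]
      have hlim : Tendsto (fun k => u ⬝ᵥ (v k).mulVec u) atTop (𝓝 (u ⬝ᵥ H.mulVec u)) := by
        simp only [dot_mulVec_eq_sum]
        refine tendsto_finset_sum _ fun i _ => tendsto_finset_sum _ fun j _ => ?_
        exact (tendsto_const_nhds.mul (hventry i j)).mul tendsto_const_nhds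
      have hHu : u ⬝ᵥ H.mulVec u ≤ 0 := le_of_tendsto hlim (Eventually.of_forall hvk)
      rw [hu, conj_quad, dot_mulVec_eq_sum,
        subtype_double_sum (fun i => a i = 0) _ wt (fun i hi => by simp [hwt, hi])] at hHu
      calc ∑ i : {i // a i = 0}, ∑ j : {j // a j = 0}, w i * (Uᵀ * H * U) i.1 j.1 * w j
          = ∑ i : {i // a i = 0}, ∑ j : {j // a j = 0},
              wt i.1 * (Uᵀ * H * U) i.1 j.1 * wt j.1 := by
            refine Finset.sum_congr rfl fun i _ => Finset.sum_congr rfl fun j _ => ?_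
            simp [hwt, dif_pos i.2, dif_pos j.2]
        _ ≤ 0 := hHu
  · rintro ⟨hHsym, hQsub⟩
    set B : Matrix (Fin n) (Fin n) ℝ := Uᵀ * H * U with hB
    set c : ℝ := ∑ i, ∑ j, |B i j| with hcdef
    have hc0 : 0 ≤ c := Finset.sum_nonneg fun i _ => Finset.sum_nonneg fun j _ => abs_nonneg _
    set K : ℝ := c + 1 with hK
    have hK1 : (1:ℝ) ≤ K := by linarith
    obtain ⟨d, hd0, hdle⟩ : ∃ d : ℝ, 0 < d ∧ ∀ i, a i ≠ 0 → a i ≤ -d := by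
      by_cases hne : (Finset.univ.filter (fun i => a i ≠ 0)).Nonempty
      · refine ⟨-((Finset.univ.filter (fun i => a i ≠ 0)).sup' hne a), ?_, ?_⟩
        · obtain ⟨i, hi, hieq⟩ := Finset.exists_mem_eq_sup' hne a
          have hine : a i ≠ 0 := by simpa using hi
          have := lt_of_le_of_ne (ha_le i) hine
          rw [hieq]; linarith
        · intro i hi
          rw [neg_neg]
          exact Finset.le_sup' a (by simp [hi])
      · refine ⟨1, one_pos, fun i hi => absurd ?_ hne⟩
        exact ⟨i, by simp [hi]⟩
    have hQ : ∀ x : Fin n → ℝ, (∀ i, a i ≠ 0 → x i = 0) →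
        ∑ i, ∑ j, x i * B i j * x j ≤ 0 := by
      intro x hx
      rw [subtype_double_sum (fun i => a i = 0) B x (fun i hi => hx i hi)]
      exact hQsub (fun i => x i.1)
    set ε : ℕ → ℝ := fun k => 1 / (k + 1) with hε
    have hε0 : ∀ k, 0 < ε k := fun k => by positivity
    have hε1 : ∀ k, ε k ≤ 1 := fun k => by
      rw [hε]; rw [div_le_one (by positivity)]; push_cast; linarith [Nat.cast_nonneg (α := ℝ) k]
    have hεlim : Tendsto ε atTop (𝓝 0) := tendsto_one_div_add_atTop_nhds_zero_nat
    set t : ℕ → ℝ := fun k => d * (ε k) ^ 2 / (K ^ 2 + K) with htdef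
    have hKpos : 0 < K ^ 2 + K := by nlinarith
    have htpos : ∀ k, 0 < t k := fun k => by
      rw [htdef]; exact div_pos (mul_pos hd0 (pow_pos (hε0 k) 2)) hKpos
    refine ⟨t, fun k => H - ε k • 1, htpos, ?_, ?_, ?_⟩
    · have : Tendsto (fun k => d * (ε k) ^ 2 / (K ^ 2 + K)) atTop (𝓝 (d * 0 ^ 2 / (K ^ 2 + K))) := by
        exact (((hεlim.pow 2).const_mul d).div_const _)
      simpa using this
    · have h1 : Tendsto (fun k => H - ε k • (1 : Matrix (Fin n) (Fin n) ℝ)) atTop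
          (𝓝 (H - (0:ℝ) • 1)) := tendsto_const_nhds.sub (hεlim.smul_const _)
      simpa using h1
    · intro k
      constructor
      · show (X + t k • (H - ε k • 1))ᵀ = _
        rw [Matrix.transpose_add, Matrix.transpose_smul, Matrix.transpose_sub,
          Matrix.transpose_smul, Matrix.transpose_one, hXneg.1, hHsym]
      · intro u
        have hu : u = U.mulVec (Uᵀ.mulVec u) := by
          rw [Matrix.mulVec_mulVec, hU, Matrix.one_mulVec]
        set z : Fin n → ℝ := Uᵀ.mulVec u with hz
        rw [hu, conj_quad]
        have hM : Uᵀ * (X + t k • (H - ε k • 1)) * U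
            = Matrix.diagonal a + (t k • B - (t k * ε k) • 1) := by
          rw [Matrix.mul_add, Matrix.add_mul, hUXU]
          congr 1
          rw [smul_sub, smul_smul, Matrix.mul_sub, Matrix.sub_mul,
            Matrix.mul_smul, Matrix.smul_mul, Matrix.mul_smul, Matrix.smul_mul,
            Matrix.mul_one, hU', hB]
        rw [hM, Matrix.add_mulVec, Matrix.sub_mulVec, Matrix.smul_mulVec,
          Matrix.smul_mulVec, Matrix.one_mulVec, dotProduct_add, dotProduct_sub,
          dotProduct_smul, dotProduct_smul, qdiag, dot_mulVec_eq_sum]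
        have hzz : z ⬝ᵥ z = ∑ i, z i ^ 2 := by
          simp [dotProduct, sq]
        rw [hzz, smul_eq_mul, smul_eq_mul]
        have hkeyk : t k * ((∑ i, ∑ j, |B i j|) + 1) ^ 2 / ε k
            + t k * ((∑ i, ∑ j, |B i j|) + 1) ≤ d := by
          rw [← hcdef, ← hK, htdef]
          exact key_param d K (ε k) hd0 hK1 (hε0 k) (hε1 k)
        have := key_scalar B a d (t k) (ε k) hd0 hdle hQ (htpos k) (hε0 k) hkeyk z
        linarith
end
end

section
/- Let θ : ℝⁿ → (−∞,∞] be symmetric, X ∈ Sⁿ with θ(λ(X)) finite, and H ∈ Sⁿ with dθ(λ(X))(λ′(X;H)) finite. Then the parabolic subderivative w ↦ d²θ(λ(X))(λ′(X;H) | w) is invariant under every permutation matrix Q ∈ Pⁿ_{X,H}: d²θ(λ(X))(λ′(X;H) | Qw) = d²θ(λ(X))(λ′(X;H) | w) for all w ∈ ℝⁿ. -/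
open Filter Topology Set Matrix

noncomputable section

/-- the parabolic subderivative w ↦ d²θ(λ(X))(λ′(X;H) | w) is invariant
under every permutation σ fixing λ(X) and λ′(X;H) (the group Pⁿ_{X,H}). -/
theorem parab_subderiv_symmetric {n : ℕ} (θ : (Fin n → ℝ) → EReal)
    (hθsym : ∀ (σ : Equiv.Perm (Fin n)) (x : Fin n → ℝ), θ (x ∘ σ) = θ x)
    (X : Matrix (Fin n) (Fin n) ℝ) (hX : X.IsSymm)
    (lam : Matrix (Fin n) (Fin n) ℝ → Fin n → ℝ)
    (hlam : ∀ M : Matrix (Fin n) (Fin n) ℝ, M.IsSymm → IsEigVec M (lam M))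
    (a : Fin n → ℝ) (ha : lam X = a)
    (cθ : ℝ) (hθa : θ a = (cθ : EReal))
    (H : Matrix (Fin n) (Fin n) ℝ) (hH : H.IsSymm)
    (d : Fin n → ℝ)
    (hd : ∀ i, Filter.Tendsto (fun t : ℝ => (lam (X + t • H) i - a i) / t)
      (nhdsWithin 0 (Set.Ioi 0)) (nhds (d i)))
    (s : ℝ) (hs : subderiv θ a d = (s : EReal))
    (σ : Equiv.Perm (Fin n)) (hσa : a ∘ σ = a) (hσd : d ∘ σ = d)
    (w : Fin n → ℝ) :
    parabSubderiv θ a d s (w ∘ σ) = parabSubderiv θ a d s w := by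
  have hφc : Continuous (fun z : Fin n → ℝ => z ∘ σ) :=
    continuous_pi fun i => continuous_apply _
  have hφc' : Continuous (fun z : Fin n → ℝ => z ∘ ⇑σ.symm) :=
    continuous_pi fun i => continuous_apply _
  have hmap : Filter.map (fun z : Fin n → ℝ => z ∘ σ) (nhds w) = nhds (w ∘ σ) := by
    refine le_antisymm (hφc.tendsto w) ?_
    have h2 : Filter.map (fun z : Fin n → ℝ => z ∘ ⇑σ.symm) (nhds (w ∘ σ)) ≤ nhds w := by
      have h3 := hφc'.tendsto (w ∘ σ)
      have : (w ∘ σ) ∘ ⇑σ.symm = w := by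
        funext i; simp [Function.comp]
      rwa [this] at h3
    calc nhds (w ∘ ⇑σ)
        = Filter.map (fun z : Fin n → ℝ => z ∘ ⇑σ)
            (Filter.map (fun z : Fin n → ℝ => z ∘ ⇑σ.symm) (nhds (w ∘ σ))) := by
          rw [Filter.map_map]
          have : ((fun z : Fin n → ℝ => z ∘ ⇑σ) ∘ fun z : Fin n → ℝ => z ∘ ⇑σ.symm) = id := by
            funext z; funext i; simp [Function.comp]
          rw [this, Filter.map_id]
      _ ≤ _ := Filter.map_mono h2
  unfold parabSubderiv
  rw [← hmap]
  rw [Filter.prod_map_right, ← Filter.liminf_comp]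
  congr 1
  funext p
  have hkey : θ (a + p.1 • d + (p.1 ^ 2 / 2) • (p.2 ∘ σ))
      = θ (a + p.1 • d + (p.1 ^ 2 / 2) • p.2) := by
    have : a + p.1 • d + (p.1 ^ 2 / 2) • (p.2 ∘ σ)
        = (a + p.1 • d + (p.1 ^ 2 / 2) • p.2) ∘ σ := by
      funext i
      have ha' := congrFun hσa i
      have hd' := congrFun hσd i
      simp only [Function.comp, Pi.add_apply, Pi.smul_apply, smul_eq_mul] at *
      rw [ha', hd']
    rw [this, hθsym σ]
  simp only [Prod.map, Function.comp, id]
  rw [hkey]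
end
end

section
/- Let g : Sⁿ → (−∞,∞] be orthogonally invariant and convex with X ∈ Sⁿ, g(X) finite. If v ∈ ℝⁿ satisfies Diag(v) ∈ ∂g(Diag(λ(X))) and U ∈ Oⁿ(X), then U Diag(v) Uᵀ ∈ ∂g(X); and for every H ∈ Sⁿ the second subderivatives agree: d²g(X, U Diag(v)Uᵀ)(UHUᵀ) = d²g(Diag(λ(X)), Diag(v))(H). -/
open Filter Topology Set Matrix

noncomputable section

/-- for orthogonally invariant convex g, if Diag(v) ∈ ∂g(Diag(λ(X))) and
U ∈ Oⁿ(X), then U Diag(v) Uᵀ ∈ ∂g(X) and the second subderivatives agree: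
d²g(X, U Diag(v)Uᵀ)(UHUᵀ) = d²g(Diag(λ(X)), Diag(v))(H). -/
theorem second_subderiv_orth_invariant {n : ℕ}
    (g : Matrix (Fin n) (Fin n) ℝ → EReal)
    (hdom : ∀ X : Matrix (Fin n) (Fin n) ℝ, ¬ X.IsSymm → g X = ⊤)
    (hinv : ∀ (O M : Matrix (Fin n) (Fin n) ℝ), O * Oᵀ = 1 → g (Oᵀ * M * O) = g M)
    (hconv : ∀ (A B : Matrix (Fin n) (Fin n) ℝ) (s t : ℝ), 0 ≤ s → 0 ≤ t → s + t = 1 →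
      g (s • A + t • B) ≤ ((s : ℝ) : EReal) * g A + ((t : ℝ) : EReal) * g B)
    (X U : Matrix (Fin n) (Fin n) ℝ) (a : Fin n → ℝ)
    (hord : ∀ i j : Fin n, i ≤ j → a j ≤ a i)
    (hU : U * Uᵀ = 1) (hXU : X = U * Matrix.diagonal a * Uᵀ)
    (c : ℝ) (hfin : g X = (c : EReal))
    (v : Fin n → ℝ)
    (hv : ∀ Z : Matrix (Fin n) (Fin n) ℝ,
      g (Matrix.diagonal a) +
        ((mInner (Matrix.diagonal v) (Z - Matrix.diagonal a) : ℝ) : EReal) ≤ g Z) :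
    (∀ Z : Matrix (Fin n) (Fin n) ℝ,
        g X + ((mInner (U * Matrix.diagonal v * Uᵀ) (Z - X) : ℝ) : EReal) ≤ g Z) ∧
      ∀ H : Matrix (Fin n) (Fin n) ℝ, H.IsSymm →
        subderiv2With mInner g X (U * Matrix.diagonal v * Uᵀ) (U * H * Uᵀ) =
          subderiv2With mInner g (Matrix.diagonal a) (Matrix.diagonal v) H := by
  have hUU : Uᵀ * U = 1 := mul_eq_one_comm.mp hU
  -- g is invariant under conjugation by U
  have hg : ∀ M, g (U * M * Uᵀ) = g M := by
    intro M
    have h := hinv Uᵀ M (by simpa using hUU)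
    simpa using h
  have hgX : g X = g (Matrix.diagonal a) := by rw [hXU, hg]
  -- inner product invariance
  have hip : ∀ A B : Matrix (Fin n) (Fin n) ℝ,
      mInner (U * A * Uᵀ) (U * B * Uᵀ) = mInner A B := by
    intro A B
    have h1 : (U * A * Uᵀ) * (U * B * Uᵀ) = U * (A * B) * Uᵀ := by
      calc (U * A * Uᵀ) * (U * B * Uᵀ) = U * A * (Uᵀ * U) * (B * Uᵀ) := by
            simp only [Matrix.mul_assoc]
        _ = U * (A * B) * Uᵀ := by rw [hUU]; simp only [Matrix.mul_assoc, Matrix.mul_one,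
            Matrix.one_mul]
    rw [mInner, h1, Matrix.trace_mul_cycle, ← Matrix.mul_assoc, hUU, Matrix.one_mul, mInner]
  have hconj : ∀ W : Matrix (Fin n) (Fin n) ℝ, U * (Uᵀ * W * U) * Uᵀ = W := by
    intro W
    calc U * (Uᵀ * W * U) * Uᵀ = (U * Uᵀ) * W * (U * Uᵀ) := by
          simp only [Matrix.mul_assoc]
      _ = W := by rw [hU]; simp
  constructor
  · intro Z
    have hZ : g (Uᵀ * Z * U) = g Z := hinv U Z hU
    have hsub : Z - X = U * ((Uᵀ * Z * U) - Matrix.diagonal a) * Uᵀ := by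
      rw [Matrix.mul_sub, Matrix.sub_mul, hconj, ← hXU]
    have hm : mInner (U * Matrix.diagonal v * Uᵀ) (Z - X)
        = mInner (Matrix.diagonal v) ((Uᵀ * Z * U) - Matrix.diagonal a) := by
      rw [hsub, hip]
    calc g X + ((mInner (U * Matrix.diagonal v * Uᵀ) (Z - X) : ℝ) : EReal)
        = g (Matrix.diagonal a) +
          ((mInner (Matrix.diagonal v) ((Uᵀ * Z * U) - Matrix.diagonal a) : ℝ) : EReal) := by
          rw [hgX, hm]
      _ ≤ g (Uᵀ * Z * U) := hv _
      _ = g Z := hZ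
  · intro H _
    -- change of variables W ↦ U W Uᵀ is a homeomorphism
    have hcont1 : Continuous fun W : Matrix (Fin n) (Fin n) ℝ => U * W * Uᵀ :=
      (continuous_const.matrix_mul continuous_id).matrix_mul continuous_const
    have hcont2 : Continuous fun W : Matrix (Fin n) (Fin n) ℝ => Uᵀ * W * U :=
      (continuous_const.matrix_mul continuous_id).matrix_mul continuous_const
    let e : Matrix (Fin n) (Fin n) ℝ ≃ₜ Matrix (Fin n) (Fin n) ℝ :=
      { toFun := fun W => U * W * Uᵀ
        invFun := fun W => Uᵀ * W * U
        left_inv := by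
          intro W
          calc Uᵀ * (U * W * Uᵀ) * U = (Uᵀ * U) * W * (Uᵀ * U) := by
                simp only [Matrix.mul_assoc]
            _ = W := by rw [hUU]; simp
        right_inv := fun W => hconj W
        continuous_toFun := hcont1
        continuous_invFun := hcont2 }
    have hmap : Filter.map (fun W => U * W * Uᵀ) (nhds H) = nhds (U * H * Uᵀ) :=
      e.map_nhds_eq H
    have hprod : (nhdsWithin (0 : ℝ) (Set.Ioi 0)) ×ˢ nhds (U * H * Uᵀ)
        = Filter.map (Prod.map (id : ℝ → ℝ) (fun W => U * W * Uᵀ))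
          ((nhdsWithin (0 : ℝ) (Set.Ioi 0)) ×ˢ nhds H) := by
      rw [← hmap, Filter.prod_map_right]
    -- pointwise identity of the integrands after change of variables
    have hfun : ∀ p : ℝ × Matrix (Fin n) (Fin n) ℝ,
        ((2 / p.1 ^ 2 : ℝ) : EReal) *
          (g (X + p.1 • (U * p.2 * Uᵀ)) - g X -
            ((p.1 * mInner (U * Matrix.diagonal v * Uᵀ) (U * p.2 * Uᵀ) : ℝ) : EReal))
        = ((2 / p.1 ^ 2 : ℝ) : EReal) *
          (g (Matrix.diagonal a + p.1 • p.2) - g (Matrix.diagonal a) -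
            ((p.1 * mInner (Matrix.diagonal v) p.2 : ℝ) : EReal)) := by
      intro p
      have h1 : X + p.1 • (U * p.2 * Uᵀ) = U * (Matrix.diagonal a + p.1 • p.2) * Uᵀ := by
        rw [hXU, Matrix.mul_add, Matrix.add_mul]
        congr 1
        rw [Matrix.mul_smul, Matrix.smul_mul]
      rw [h1, hg, hgX, hip]
    unfold subderiv2With
    rw [hprod]
    simp only [Filter.liminf]
    rw [Filter.map_map]
    refine congrArg Filter.limsInf (Filter.map_congr (Filter.Eventually.of_forall fun p => ?_))
    simpa [Function.comp, Prod.map] using hfun p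
end
end
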